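/- arXiv:1807.06692 — 5 statements merged into one kernel-verified Lean document; each statement's English description precedes it below -/
import Mathlib

section
/- Let n ≥ 2 and let (x,k), (y,l) ∈ G_n = Z_2 ≀ Z_n with k ≠ l. Let p₁ ∈ {1, ..., n−1} satisfy p₁ ≡ l − k (mod n) and let p₂ = n − p₁, so that p₁ and p₂ are the lengths of the two paths Q₁ = (k, k+1, ..., k+p₁ = l) and Q₂ = (k, k−1, ..., k−p₂ = l) joining k to l in the cycle Z_n. For i = 1, 2 let g_i be the maximum, over pairs of distinct vertices u, v of Q_i such that no vertex lying strictly between u and v along Q_i belongs to x △ y, of the distance from u to v along Q_i (so g_i ≥ 1). Then min{p₁ + 2(p₂ − g₂), p₂ + 2(p₁ − g₁)} ≤ ρ((x,k),(y,l)) ≤ min{p₁ + 2(p₂ − g₂), p₂ + 2(p₁ − g₁)} + 2. -/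
open scoped symmDiff

/-- Elements of the lamplighter group `Z₂ ≀ Z_n`: a set of lit lamps and a position. -/
abbrev Lamp (n : ℕ) := Set (ZMod n) × ZMod n

/-- Group multiplication `(x,g)·(y,h) = (x △ (g+y), g+h)`. -/
def lampMul {n : ℕ} (u v : Lamp n) : Lamp n :=
  (u.1 ∆ ((u.2 + ·) '' v.1), u.2 + v.2)

/-- Group inverse in the lamplighter group. -/
def lampInv {n : ℕ} (u : Lamp n) : Lamp n :=
  ((· - u.2) '' u.1, -u.2)

/-- The generator `t = (∅, 1)`. -/
def lampT (n : ℕ) : Lamp n := (∅, 1)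

/-- The generator `a = ({0}, 0)`. -/
def lampA (n : ℕ) : Lamp n := ({0}, 0)

/-- The generator `ta`. -/
def lampTA (n : ℕ) : Lamp n := lampMul (lampT n) (lampA n)

/-- Word metric w.r.t. a generating set `S`: the least `m` such that `u⁻¹v`
is a product of `m` elements of `S ∪ S⁻¹`, i.e. `v = u·s₁⋯s_m`. -/
noncomputable def wordDist {n : ℕ} (S : Set (Lamp n)) (u v : Lamp n) : ℕ :=
  sInf {m | ∃ w : List (Lamp n), w.length = m ∧
    (∀ s ∈ w, s ∈ S ∨ ∃ g ∈ S, s = lampInv g) ∧ v = w.foldl lampMul u}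

/-- The word metric `ρ` on `Z₂ ≀ Z_n` w.r.t. the generating set `{t, ta}`. -/
noncomputable def lampDist (n : ℕ) (u v : Lamp n) : ℕ :=
  wordDist {lampT n, lampTA n} u v

/-- Length of the longest common prefix of two vertices of the binary tree. -/
def lgc : List Bool → List Bool → ℕ
  | a :: as, b :: bs => if a = b then lgc as bs + 1 else 0
  | _, _ => 0

/-- Graph distance in the binary tree (vertices = `{0,1}`-sequences). -/
def treeDist (A B : List Bool) : ℕ := A.length + B.length - 2 * lgc A B

/-- The arc `{a, a+1, ..., a+m}` in `Z_n`. -/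
def arcSet (n : ℕ) (a : ZMod n) (m : ℕ) : Set (ZMod n) :=
  {z | ∃ i ≤ m, z = a + (i : ZMod n)}

/-- The arc `P₁ = {n/6, ..., 5n/6}` of `Z_n` (identified with `{0,...,n-1}` via `val`). -/
def P1set (n : ℕ) : Set (ZMod n) := {z | n / 6 ≤ z.val ∧ z.val ≤ 5 * n / 6}

/-- The subset `P_{1,n} = {(x,k) ∈ G_n : k ∈ P₁}`. -/
def lampP1 (n : ℕ) : Set (Lamp n) := {u | u.2 ∈ P1set n}

/-- The set `W_n ⊆ T_n × T_n`. -/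
def Wset (n : ℕ) : Set (List Bool × List Bool) :=
  {p | p.1.length + p.2.length = n ∧ n / 6 ≤ p.1.length ∧ p.1.length ≤ 5 * n / 6}

open Classical in
/-- The map `φ_{1,n} : P_{1,n} → W_n`. -/
noncomputable def phi1 (n : ℕ) (u : Lamp n) : List Bool × List Bool :=
  ((List.range u.2.val).map fun j => if ((j : ℕ) : ZMod n) ∈ u.1 then true else false,
   (List.range (n - u.2.val)).map fun i => if ((n - 1 - i : ℕ) : ZMod n) ∈ u.1 then true else false)

/-- "X admits an equivalent uniformly convex norm" (= superreflexivity, by Enflo). -/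
def HasEquivUnifConvexNorm (X : Type*) [NormedAddCommGroup X] [NormedSpace ℝ X] : Prop :=
  ∃ N : X → ℝ,
    (∀ x, N x = 0 ↔ x = 0) ∧
    (∀ (c : ℝ) (x : X), N (c • x) = |c| * N x) ∧
    (∀ x y, N (x + y) ≤ N x + N y) ∧
    (∃ c₁ > (0 : ℝ), ∃ c₂ > (0 : ℝ), ∀ x, c₁ * ‖x‖ ≤ N x ∧ N x ≤ c₂ * ‖x‖) ∧
    (∀ ε > (0 : ℝ), ∃ δ > (0 : ℝ), ∀ x y,
      N x ≤ 1 → N y ≤ 1 → ε ≤ N (x - y) → N (x + y) ≤ 2 - δ)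

noncomputable section LampAux
open Classical

namespace LampAux

variable {n : ℕ}

/-- `t⁻¹`. -/
def lampTi (n : ℕ) : Lamp n := (∅, -1)
/-- `(ta)⁻¹`. -/
def lampTAi (n : ℕ) : Lamp n := ({0}, -1)

lemma lampTA_eq : lampTA n = ({1}, 1) := by
  simp only [lampTA, lampMul, lampT, lampA, Set.image_singleton]
  refine Prod.ext ?_ (by simp)
  ext p
  simp [Set.mem_symmDiff]

lemma lampInv_T : lampInv (lampT n) = lampTi n := by
  simp [lampInv, lampT, lampTi]

lemma lampInv_TA : lampInv (lampTA n) = lampTAi n := by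
  rw [lampTA_eq]
  simp [lampInv, lampTAi, Set.image_singleton]

lemma mul_T (z : Set (ZMod n)) (g : ZMod n) :
    lampMul (z, g) (lampT n) = (z, g + 1) := by
  simp [lampMul, lampT]
lemma mul_Ti (z : Set (ZMod n)) (g : ZMod n) :
    lampMul (z, g) (lampTi n) = (z, g - 1) := by
  simp [lampMul, lampTi, sub_eq_add_neg]
lemma mul_TA (z : Set (ZMod n)) (g : ZMod n) :
    lampMul (z, g) (lampTA n) = (z ∆ {g + 1}, g + 1) := by
  rw [lampTA_eq]; simp [lampMul, Set.image_singleton]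
lemma mul_TAi (z : Set (ZMod n)) (g : ZMod n) :
    lampMul (z, g) (lampTAi n) = (z ∆ {g}, g - 1) := by
  simp [lampMul, lampTAi, Set.image_singleton, sub_eq_add_neg]


/-- Rightward run with toggles at lamps in `D`. -/
def rtW (D : Set (ZMod n)) (g : ZMod n) (c : ℕ) : List (Lamp n) :=
  (List.range c).map fun r => if g + (r : ℕ) + 1 ∈ D then lampTA n else lampT n

/-- Leftward run with toggles at lamps in `D`. -/
def ltW (D : Set (ZMod n)) (g : ZMod n) (c : ℕ) : List (Lamp n) :=
  (List.range c).map fun r => if g - (r : ℕ) ∈ D then lampTAi n else lampTi n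

lemma natCast_inj_of_lt {a b : ℕ} (ha : a < n) (hb : b < n) (h : (a : ZMod n) = b) :
    a = b := by
  have h1 := ZMod.val_cast_of_lt (n := n) ha
  have h2 := ZMod.val_cast_of_lt (n := n) hb
  rw [h, h2] at h1
  omega

/-- Generic single-toggle update of the accumulated toggle set. -/
lemma symmDiff_insert {z S : Set (ZMod n)} {q : ZMod n} (hq : q ∉ S) :
    (z ∆ S) ∆ {q} = z ∆ (S ∪ {q}) := by
  rw [symmDiff_assoc, Disjoint.symmDiff_eq_sup (Set.disjoint_singleton_right.mpr hq)]
  rfl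

lemma natCast_ne_natCast {a b : ℕ} (ha : 0 < a) (hab : a < b) (hb : b ≤ n) :
    (a : ZMod n) ≠ (b : ZMod n) := by
  intro h
  have h2 : a % n = b % n := (ZMod.natCast_eq_natCast_iff a b n).mp h
  rw [Nat.mod_eq_of_lt (by omega)] at h2
  rcases eq_or_lt_of_le hb with rfl | hbn
  · rw [Nat.mod_self] at h2; omega
  · rw [Nat.mod_eq_of_lt hbn] at h2; omega

lemma foldl_rtW (D : Set (ZMod n)) (z : Set (ZMod n)) (g : ZMod n) (c : ℕ) (hc : c ≤ n) :
    List.foldl lampMul (z, g) (rtW D g c) =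
      (z ∆ {p | p ∈ D ∧ ∃ r < c, p = g + (r : ℕ) + 1}, g + (c : ℕ)) := by
  induction c with
  | zero =>
      simp only [rtW, List.range_zero, List.map_nil, List.foldl_nil, Nat.cast_zero, add_zero]
      refine Prod.ext ?_ rfl
      have : {p : ZMod n | p ∈ D ∧ ∃ r < 0, p = g + (r : ℕ) + 1} = ∅ := by
        ext p; simp
      rw [this]
      simp [symmDiff_def]
  | succ c ih =>
      have hc' : c ≤ n := by omega
      have hfresh : ∀ r : ℕ, r < c → (g + (r : ℕ) + 1 : ZMod n) ≠ g + (c : ℕ) + 1 := by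
        intro r hr h
        have h2 : ((r + 1 : ℕ) : ZMod n) = ((c + 1 : ℕ) : ZMod n) := by
          push_cast
          apply add_left_cancel (a := g)
          rw [← add_assoc, ← add_assoc]; exact h
        exact natCast_ne_natCast (by omega) (by omega) hc h2
      have hset : ∀ A : Set (ZMod n),
          {p : ZMod n | p ∈ D ∧ ∃ r < c + 1, p = g + (r : ℕ) + 1}
            = {p : ZMod n | p ∈ D ∧ ∃ r < c, p = g + (r : ℕ) + 1}
              ∪ (if (g + (c : ℕ) + 1 : ZMod n) ∈ D then {g + (c : ℕ) + 1} else ∅) := by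
        intro _
        ext p
        by_cases hD : (g + (c : ℕ) + 1 : ZMod n) ∈ D <;>
          simp only [if_pos, if_neg, hD, Set.mem_union, Set.mem_setOf_eq,
            Set.mem_singleton_iff, Set.mem_empty_iff_false, or_false, if_true, if_false]
        · constructor
          · rintro ⟨hpD, r, hr, rfl⟩
            rcases Nat.lt_or_ge r c with h | h
            · exact Or.inl ⟨hpD, r, h, rfl⟩
            · right; have : r = c := by omega
              subst this; rfl
          · rintro (⟨hpD, r, hr, rfl⟩ | rfl)
            · exact ⟨hpD, r, by omega, rfl⟩
            · exact ⟨hD, c, by omega, rfl⟩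
        · constructor
          · rintro ⟨hpD, r, hr, rfl⟩
            have : r < c := by
              rcases Nat.lt_or_ge r c with h | h
              · exact h
              · have : r = c := by omega
                subst this; exact absurd hpD hD
            exact ⟨hpD, r, this, rfl⟩
          · rintro ⟨hpD, r, hr, rfl⟩
            exact ⟨hpD, r, by omega, rfl⟩
      rw [rtW, List.range_succ, List.map_append, List.foldl_append]
      rw [show ((List.range c).map fun r => if g + (r : ℕ) + 1 ∈ D then lampTA n else lampT n)
            = rtW D g c from rfl, ih hc']
      simp only [List.map_cons, List.map_nil, List.foldl_cons, List.foldl_nil]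
      by_cases hD : (g + (c : ℕ) + 1 : ZMod n) ∈ D
      · rw [if_pos hD, mul_TA]
        refine Prod.ext ?_ (by simp only; push_cast; ring)
        simp only
        rw [hset ∅, if_pos hD, ← symmDiff_insert]
        rintro ⟨-, r, hr, he⟩
        exact hfresh r hr he.symm
      · rw [if_neg hD, mul_T]
        refine Prod.ext ?_ (by simp only; push_cast; ring)
        simp only
        rw [hset ∅, if_neg hD, Set.union_empty]

lemma foldl_ltW (D : Set (ZMod n)) (z : Set (ZMod n)) (g : ZMod n) (c : ℕ) (hc : c ≤ n) :
    List.foldl lampMul (z, g) (ltW D g c) =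
      (z ∆ {p | p ∈ D ∧ ∃ r < c, p = g - (r : ℕ)}, g - (c : ℕ)) := by
  induction c with
  | zero =>
      simp only [ltW, List.range_zero, List.map_nil, List.foldl_nil, Nat.cast_zero, sub_zero]
      refine Prod.ext ?_ rfl
      have : {p : ZMod n | p ∈ D ∧ ∃ r < 0, p = g - (r : ℕ)} = ∅ := by
        ext p; simp
      rw [this]
      simp [symmDiff_def]
  | succ c ih =>
      have hc' : c ≤ n := by omega
      have hfresh : ∀ r : ℕ, r < c → (g - (r : ℕ) : ZMod n) ≠ g - (c : ℕ) := by
        intro r hr h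
        rw [sub_right_inj] at h
        have := natCast_inj_of_lt (by omega) (by omega) h
        omega
      have hset :
          {p : ZMod n | p ∈ D ∧ ∃ r < c + 1, p = g - (r : ℕ)}
            = {p : ZMod n | p ∈ D ∧ ∃ r < c, p = g - (r : ℕ)}
              ∪ (if (g - (c : ℕ) : ZMod n) ∈ D then {g - (c : ℕ)} else ∅) := by
        ext p
        by_cases hD : (g - (c : ℕ) : ZMod n) ∈ D <;>
          simp only [if_pos, if_neg, hD, Set.mem_union, Set.mem_setOf_eq,
            Set.mem_singleton_iff, Set.mem_empty_iff_false, or_false, if_true, if_false]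
        · constructor
          · rintro ⟨hpD, r, hr, rfl⟩
            rcases Nat.lt_or_ge r c with h | h
            · exact Or.inl ⟨hpD, r, h, rfl⟩
            · right; have : r = c := by omega
              subst this; rfl
          · rintro (⟨hpD, r, hr, rfl⟩ | rfl)
            · exact ⟨hpD, r, by omega, rfl⟩
            · exact ⟨hD, c, by omega, rfl⟩
        · constructor
          · rintro ⟨hpD, r, hr, rfl⟩
            have : r < c := by
              rcases Nat.lt_or_ge r c with h | h
              · exact h
              · have : r = c := by omega
                subst this; exact absurd hpD hD
            exact ⟨hpD, r, this, rfl⟩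
          · rintro ⟨hpD, r, hr, rfl⟩
            exact ⟨hpD, r, by omega, rfl⟩
      rw [ltW, List.range_succ, List.map_append, List.foldl_append]
      rw [show ((List.range c).map fun r => if g - (r : ℕ) ∈ D then lampTAi n else lampTi n)
            = ltW D g c from rfl, ih hc']
      simp only [List.map_cons, List.map_nil, List.foldl_cons, List.foldl_nil]
      by_cases hD : (g - (c : ℕ) : ZMod n) ∈ D
      · rw [if_pos hD, mul_TAi]
        refine Prod.ext ?_ (by simp only; push_cast; ring)
        simp only
        rw [hset, if_pos hD, ← symmDiff_insert]
        rintro ⟨-, r, hr, he⟩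
        exact hfresh r hr he.symm
      · rw [if_neg hD, mul_Ti]
        refine Prod.ext ?_ (by simp only; push_cast; ring)
        simp only
        rw [hset, if_neg hD, Set.union_empty]

lemma foldl_replicate_T (z : Set (ZMod n)) (g : ZMod n) (c : ℕ) :
    List.foldl lampMul (z, g) (List.replicate c (lampT n)) = (z, g + (c : ℕ)) := by
  induction c generalizing g with
  | zero => simp
  | succ c ih =>
      rw [List.replicate_succ, List.foldl_cons, mul_T, ih]
      refine Prod.ext rfl ?_
      simp only; push_cast; ring

lemma foldl_replicate_Ti (z : Set (ZMod n)) (g : ZMod n) (c : ℕ) :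
    List.foldl lampMul (z, g) (List.replicate c (lampTi n)) = (z, g - (c : ℕ)) := by
  induction c generalizing g with
  | zero => simp
  | succ c ih =>
      rw [List.replicate_succ, List.foldl_cons, mul_Ti, ih]
      refine Prod.ext rfl ?_
      simp only; push_cast; ring

lemma gen_rtW (D : Set (ZMod n)) (g : ZMod n) (c : ℕ) :
    ∀ s ∈ rtW D g c, s ∈ ({lampT n, lampTA n} : Set (Lamp n)) ∨
      ∃ u ∈ ({lampT n, lampTA n} : Set (Lamp n)), s = lampInv u := by
  intro s hs
  rw [rtW, List.mem_map] at hs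
  obtain ⟨r, -, rfl⟩ := hs
  by_cases h : (g + (r : ℕ) + 1 : ZMod n) ∈ D
  · left; rw [if_pos h]; right; rfl
  · left; rw [if_neg h]; left; rfl

lemma gen_ltW (D : Set (ZMod n)) (g : ZMod n) (c : ℕ) :
    ∀ s ∈ ltW D g c, s ∈ ({lampT n, lampTA n} : Set (Lamp n)) ∨
      ∃ u ∈ ({lampT n, lampTA n} : Set (Lamp n)), s = lampInv u := by
  intro s hs
  rw [ltW, List.mem_map] at hs
  obtain ⟨r, -, rfl⟩ := hs
  by_cases h : (g - (r : ℕ) : ZMod n) ∈ D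
  · right; rw [if_pos h]
    exact ⟨lampTA n, Or.inr rfl, lampInv_TA.symm⟩
  · right; rw [if_neg h]
    exact ⟨lampT n, Or.inl rfl, lampInv_T.symm⟩

lemma gen_repT (c : ℕ) :
    ∀ s ∈ List.replicate c (lampT n), s ∈ ({lampT n, lampTA n} : Set (Lamp n)) ∨
      ∃ u ∈ ({lampT n, lampTA n} : Set (Lamp n)), s = lampInv u := by
  intro s hs
  rw [List.mem_replicate] at hs
  exact Or.inl (Or.inl hs.2)

lemma gen_repTi (c : ℕ) :
    ∀ s ∈ List.replicate c (lampTi n), s ∈ ({lampT n, lampTA n} : Set (Lamp n)) ∨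
      ∃ u ∈ ({lampT n, lampTA n} : Set (Lamp n)), s = lampInv u := by
  intro s hs
  rw [List.mem_replicate] at hs
  exact Or.inr ⟨lampT n, Or.inl rfl, hs.2.trans lampInv_T.symm⟩

lemma upper1 (hn : 2 ≤ n) (x y : Set (ZMod n)) (k : ZMod n)
    (p₁ : ℕ) (hp₁pos : 1 ≤ p₁) (hp₁le : p₁ ≤ n - 1)
    (i j : ℕ) (hij : i < j) (hjp : j ≤ p₁)
    (hgap : ∀ m : ℕ, i < m → m < j → (k + (m : ZMod n)) ∉ x ∆ y) :
    ∃ w : List (Lamp n), w.length = (n - p₁) + 2 * (p₁ - (j - i)) + 2 ∧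
      (∀ s ∈ w, s ∈ ({lampT n, lampTA n} : Set (Lamp n)) ∨
        ∃ u ∈ ({lampT n, lampTA n} : Set (Lamp n)), s = lampInv u) ∧
      (y, k + (p₁ : ℕ)) = List.foldl lampMul (x, k) w := by
  have : NeZero n := ⟨by omega⟩
  set D := x ∆ y with hD
  refine ⟨rtW D k i ++ List.replicate i (lampTi n) ++ ltW D k (n - j + 1)
      ++ List.replicate (p₁ - j + 1) (lampT n), ?_, ?_, ?_⟩
  · simp only [List.length_append, List.length_map, List.length_range, List.length_replicate,
      rtW, ltW]
    omega
  · intro s hs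
    simp only [List.mem_append] at hs
    rcases hs with ((h | h) | h) | h
    · exact gen_rtW D k i s h
    · exact gen_repTi i s h
    · exact gen_ltW D k (n - j + 1) s h
    · exact gen_repT (p₁ - j + 1) s h
  · rw [List.foldl_append, List.foldl_append, List.foldl_append]
    rw [foldl_rtW D x k i (by omega), foldl_replicate_Ti, add_sub_cancel_right,
      foldl_ltW D _ k (n - j + 1) (by omega), foldl_replicate_T]
    have hpos : k - ((n - j + 1 : ℕ) : ZMod n) + ((p₁ - j + 1 : ℕ) : ZMod n) = k + (p₁ : ℕ) := by
      push_cast [Nat.cast_sub (show j ≤ n by omega), Nat.cast_sub hjp, ZMod.natCast_self]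
      ring
    have hset : (x ∆ {p | p ∈ D ∧ ∃ r < i, p = k + (r : ℕ) + 1})
        ∆ {p | p ∈ D ∧ ∃ r < n - j + 1, p = k - (r : ℕ)} = y := by
      rw [symmDiff_assoc]
      have hdisj : Disjoint {p : ZMod n | p ∈ D ∧ ∃ r < i, p = k + (r : ℕ) + 1}
          {p : ZMod n | p ∈ D ∧ ∃ r < n - j + 1, p = k - (r : ℕ)} := by
        rw [Set.disjoint_left]
        rintro p ⟨-, r, hr, rfl⟩ ⟨-, r', hr', he⟩
        have h0 : ((r + 1 + r' : ℕ) : ZMod n) = 0 := by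
          push_cast
          linear_combination he
        have hdvd := (ZMod.natCast_eq_zero_iff _ n).mp h0
        have := Nat.le_of_dvd (by omega) hdvd
        omega
      rw [hdisj.symmDiff_eq_sup]
      have hunion : {p : ZMod n | p ∈ D ∧ ∃ r < i, p = k + (r : ℕ) + 1}
          ⊔ {p : ZMod n | p ∈ D ∧ ∃ r < n - j + 1, p = k - (r : ℕ)} = D := by
        apply le_antisymm
        · rintro p (⟨hp, -⟩ | ⟨hp, -⟩) <;> exact hp
        · intro p hp
          have hval : k + ((p - k).val : ℕ) = p := by
            rw [ZMod.natCast_val, ZMod.cast_id]; ring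
          set m' := (p - k).val with hm'
          have hmlt : m' < n := ZMod.val_lt _
          rcases Nat.eq_zero_or_pos m' with h0 | h0
          · right
            refine ⟨hp, 0, by omega, ?_⟩
            rw [← hval, h0]; simp
          · rcases Nat.lt_or_ge i m' with him | him
            · rcases Nat.lt_or_ge m' j with hmj | hmj
              · exact absurd (hval ▸ hp) (hgap m' him hmj)
              · right
                refine ⟨hp, n - m', by omega, ?_⟩
                rw [← hval]
                push_cast [Nat.cast_sub (le_of_lt hmlt), ZMod.natCast_self]
                ring
            · left
              refine ⟨hp, m' - 1, by omega, ?_⟩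
              rw [← hval]
              push_cast [Nat.cast_sub h0]
              ring
      rw [hunion, hD, symmDiff_symmDiff_cancel_left]
    rw [hpos, hset]

lemma upper2 (hn : 2 ≤ n) (x y : Set (ZMod n)) (k : ZMod n)
    (p₁ : ℕ) (hp₁pos : 1 ≤ p₁) (hp₁le : p₁ ≤ n - 1)
    (i j : ℕ) (hij : i < j) (hjp : j ≤ n - p₁)
    (hgap : ∀ m : ℕ, i < m → m < j → (k - (m : ZMod n)) ∉ x ∆ y) :
    ∃ w : List (Lamp n), w.length = p₁ + 2 * ((n - p₁) - (j - i)) + 2 ∧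
      (∀ s ∈ w, s ∈ ({lampT n, lampTA n} : Set (Lamp n)) ∨
        ∃ u ∈ ({lampT n, lampTA n} : Set (Lamp n)), s = lampInv u) ∧
      (y, k + (p₁ : ℕ)) = List.foldl lampMul (x, k) w := by
  have : NeZero n := ⟨by omega⟩
  set D := x ∆ y with hD
  refine ⟨ltW D k (i + 1) ++ List.replicate (i + 1) (lampT n) ++ rtW D k (n - j)
      ++ List.replicate ((n - p₁) - j) (lampTi n), ?_, ?_, ?_⟩
  · simp only [List.length_append, List.length_map, List.length_range, List.length_replicate,
      rtW, ltW]
    omega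
  · intro s hs
    simp only [List.mem_append] at hs
    rcases hs with ((h | h) | h) | h
    · exact gen_ltW D k (i + 1) s h
    · exact gen_repT (i + 1) s h
    · exact gen_rtW D k (n - j) s h
    · exact gen_repTi ((n - p₁) - j) s h
  · rw [List.foldl_append, List.foldl_append, List.foldl_append]
    rw [foldl_ltW D x k (i + 1) (by omega), foldl_replicate_T, sub_add_cancel,
      foldl_rtW D _ k (n - j) (by omega), foldl_replicate_Ti]
    have hpos : k + ((n - j : ℕ) : ZMod n) - (((n - p₁) - j : ℕ) : ZMod n) = k + (p₁ : ℕ) := by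
      push_cast [Nat.cast_sub (show j ≤ n by omega), Nat.cast_sub (show p₁ ≤ n by omega),
        Nat.cast_sub (show j ≤ n - p₁ from hjp), ZMod.natCast_self]
      ring
    have hset : (x ∆ {p | p ∈ D ∧ ∃ r < i + 1, p = k - (r : ℕ)})
        ∆ {p | p ∈ D ∧ ∃ r < n - j, p = k + (r : ℕ) + 1} = y := by
      rw [symmDiff_assoc]
      have hdisj : Disjoint {p : ZMod n | p ∈ D ∧ ∃ r < i + 1, p = k - (r : ℕ)}
          {p : ZMod n | p ∈ D ∧ ∃ r < n - j, p = k + (r : ℕ) + 1} := by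
        rw [Set.disjoint_left]
        rintro p ⟨-, r, hr, rfl⟩ ⟨-, r', hr', he⟩
        have h0 : ((r + r' + 1 : ℕ) : ZMod n) = 0 := by
          push_cast
          linear_combination -he
        have hdvd := (ZMod.natCast_eq_zero_iff _ n).mp h0
        have := Nat.le_of_dvd (by omega) hdvd
        omega
      rw [hdisj.symmDiff_eq_sup]
      have hunion : {p : ZMod n | p ∈ D ∧ ∃ r < i + 1, p = k - (r : ℕ)}
          ⊔ {p : ZMod n | p ∈ D ∧ ∃ r < n - j, p = k + (r : ℕ) + 1} = D := by
        apply le_antisymm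
        · rintro p (⟨hp, -⟩ | ⟨hp, -⟩) <;> exact hp
        · intro p hp
          have hval : k + ((p - k).val : ℕ) = p := by
            rw [ZMod.natCast_val, ZMod.cast_id]; ring
          set m' := (p - k).val with hm'
          have hmlt : m' < n := ZMod.val_lt _
          rcases Nat.eq_zero_or_pos m' with h0 | h0
          · left
            refine ⟨hp, 0, by omega, ?_⟩
            rw [← hval, h0]; simp
          · have hkey : p = k - ((n - m' : ℕ) : ZMod n) := by
              rw [← hval]
              push_cast [Nat.cast_sub (le_of_lt hmlt), ZMod.natCast_self]
              ring
            rcases Nat.lt_or_ge i (n - m') with him | him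
            · rcases Nat.lt_or_ge (n - m') j with hmj | hmj
              · exact absurd (hkey ▸ hp) (hgap (n - m') him hmj)
              · right
                refine ⟨hp, m' - 1, by omega, ?_⟩
                rw [← hval]
                push_cast [Nat.cast_sub h0]
                ring
            · left
              refine ⟨hp, n - m', by omega, hkey⟩
      rw [hunion, hD, symmDiff_symmDiff_cancel_left]
    rw [hpos, hset]

/-! ### Lower bound machinery -/

/-- Direction of a move: `+1` for `t`/`ta`, `-1` for their inverses. -/
def mdir (d : Bool) : ℤ := if d then 1 else -1
/-- Offset of the toggled lamp relative to the pre-move position. -/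
def toffZ (d : Bool) : ℤ := if d then 1 else 0

/-- Encoding of a move as a generator (or inverse generator). -/
def enc (n : ℕ) (q : Bool × Bool) : Lamp n :=
  ((if q.2 then {((toffZ q.1 : ℤ) : ZMod n)} else ∅), ((mdir q.1 : ℤ) : ZMod n))

lemma mul_enc (z : Set (ZMod n)) (g : ZMod n) (q : Bool × Bool) :
    lampMul (z, g) (enc n q) =
      ((if q.2 then z ∆ {g + ((toffZ q.1 : ℤ) : ZMod n)} else z),
        g + ((mdir q.1 : ℤ) : ZMod n)) := by
  rcases q with ⟨d, b⟩
  cases b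
  · simp only [enc, lampMul, if_neg Bool.false_ne_true, Set.image_empty, if_false]
    refine Prod.ext ?_ rfl
    simp only
    rw [show (∅ : Set (ZMod n)) = ⊥ from rfl, symmDiff_bot]
  · simp only [enc, lampMul, if_pos, Set.image_singleton, if_true]

lemma exists_moves (w : List (Lamp n))
    (hw : ∀ s ∈ w, s ∈ ({lampT n, lampTA n} : Set (Lamp n)) ∨
      ∃ u ∈ ({lampT n, lampTA n} : Set (Lamp n)), s = lampInv u) :
    ∃ M : List (Bool × Bool), w = M.map (enc n) := by
  induction w with
  | nil => exact ⟨[], rfl⟩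
  | cons s w ih =>
      obtain ⟨M, hM⟩ := ih (fun t ht => hw t (List.mem_cons_of_mem s ht))
      have hs := hw s (List.mem_cons_self)
      have hT : lampT n = enc n (true, false) := by
        simp [lampT, enc, mdir, toffZ]
      have hTA : lampTA n = enc n (true, true) := by
        rw [lampTA_eq]; simp [enc, mdir, toffZ]
      have hTi : lampTi n = enc n (false, false) := by
        simp [lampTi, enc, mdir, toffZ]
      have hTAi : lampTAi n = enc n (false, true) := by
        simp [lampTAi, enc, mdir, toffZ]
      rcases hs with (h | h) | ⟨u, (hu | hu), hs⟩
      · exact ⟨(true, false) :: M, by rw [List.map_cons, ← hM, ← hT, h]⟩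
      · exact ⟨(true, true) :: M, by rw [List.map_cons, ← hM, ← hTA, h]⟩
      · refine ⟨(false, false) :: M, ?_⟩
        rw [List.map_cons, ← hM, ← hTi, hs, hu, lampInv_T]
      · refine ⟨(false, true) :: M, ?_⟩
        rw [List.map_cons, ← hM, ← hTAi, hs, hu, lampInv_TA]

/-- Sum of move directions. -/
def msum (M : List (Bool × Bool)) : ℤ := (M.map fun q => mdir q.1).sum

/-- Lifted position after `j` moves. -/
def Pf (M : List (Bool × Bool)) (j : ℕ) : ℤ := ((M.take j).map fun q => mdir q.1).sum

lemma foldl_enc_snd : ∀ (M : List (Bool × Bool)) (z : Set (ZMod n)) (g : ZMod n),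
    (List.foldl lampMul (z, g) (M.map (enc n))).2 = g + ((msum M : ℤ) : ZMod n)
  | [], z, g => by simp [msum]
  | q :: M, z, g => by
      rw [List.map_cons, List.foldl_cons, mul_enc]
      rw [foldl_enc_snd M _ _]
      simp only [msum, List.map_cons, List.sum_cons]
      push_cast
      ring

/-- The set of positions toggled by a sequence of moves starting at `g`. -/
def togSet (g : ZMod n) : List (Bool × Bool) → Set (ZMod n)
  | [] => ∅
  | q :: M => (if q.2 then {g + ((toffZ q.1 : ℤ) : ZMod n)} else ∅)
      ∪ togSet (g + ((mdir q.1 : ℤ) : ZMod n)) M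

lemma mem_foldl_of_not_togSet : ∀ (M : List (Bool × Bool)) (z : Set (ZMod n)) (g p : ZMod n),
    p ∉ togSet g M →
    (p ∈ (List.foldl lampMul (z, g) (M.map (enc n))).1 ↔ p ∈ z)
  | [], z, g, p, _ => by simp
  | q :: M, z, g, p, hp => by
      rw [togSet, Set.mem_union, not_or] at hp
      rw [List.map_cons, List.foldl_cons, mul_enc]
      rcases hq : q.2 with _ | _
      · rw [if_neg (by simp [hq])]
        exact mem_foldl_of_not_togSet M z _ p hp.2
      · rw [if_pos (by simp [hq])]
        rw [mem_foldl_of_not_togSet M _ _ p hp.2]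
        have hne : p ≠ g + ((toffZ q.1 : ℤ) : ZMod n) := by
          intro h
          exact hp.1 (by rw [if_pos (by simp [hq])]; exact h)
        simp [Set.mem_symmDiff, hne]

lemma togSet_char : ∀ (M : List (Bool × Bool)) (g p : ZMod n), p ∈ togSet g M →
    ∃ j, ∃ hj : j < M.length, (M.get ⟨j, hj⟩).2 = true ∧
      p = g + ((Pf M j + toffZ (M.get ⟨j, hj⟩).1 : ℤ) : ZMod n)
  | [], g, p, hp => by simp [togSet] at hp
  | q :: M, g, p, hp => by
      rw [togSet, Set.mem_union] at hp
      rcases hp with hp | hp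
      · rcases hq : q.2 with _ | _
        · rw [if_neg (by simp [hq])] at hp; exact absurd hp (Set.notMem_empty p)
        · rw [if_pos (by simp [hq])] at hp
          refine ⟨0, by simp, by simpa using hq, ?_⟩
          simp only [Pf, List.take_zero, List.map_nil, List.sum_nil, zero_add, List.get]
          simpa using hp
      · obtain ⟨j, hj, hb, hpe⟩ := togSet_char M _ p hp
        refine ⟨j + 1, by simpa using Nat.succ_lt_succ hj, by simpa using hb, ?_⟩
        have hPf : Pf (q :: M) (j + 1) = mdir q.1 + Pf M j := by
          simp [Pf, List.take_succ_cons]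
        rw [show (q :: M).get ⟨j + 1, by simpa using Nat.succ_lt_succ hj⟩ = M.get ⟨j, hj⟩
          from rfl, hPf, hpe]
        push_cast
        ring

lemma ivt_up (u : ℕ → ℤ) (s t : ℕ) (e : ℤ)
    (hstep : ∀ j, s ≤ j → j < t → u (j + 1) = u j + 1 ∨ u (j + 1) = u j - 1)
    (hst : s ≤ t) (hs : u s ≤ e) (ht : e + 1 ≤ u t) :
    ∃ j, s ≤ j ∧ j < t ∧ u j = e ∧ u (j + 1) = e + 1 := by
  induction t with
  | zero =>
      have : s = 0 := by omega
      subst this; omega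
  | succ t ih =>
      have hsle : s ≤ t := by
        rcases Nat.lt_or_ge s (t + 1) with h | h
        · omega
        · have : s = t + 1 := by omega
          subst this; omega
      by_cases hte : e + 1 ≤ u t
      · obtain ⟨j, h1, h2, h3, h4⟩ := ih (fun j hj hj' => hstep j hj (by omega)) hsle hte
        exact ⟨j, h1, by omega, h3, h4⟩
      · refine ⟨t, hsle, by omega, ?_, ?_⟩ <;>
        · rcases hstep t hsle (by omega) with h | h <;> omega

lemma ivt_down (u : ℕ → ℤ) (s t : ℕ) (e : ℤ)
    (hstep : ∀ j, s ≤ j → j < t → u (j + 1) = u j + 1 ∨ u (j + 1) = u j - 1)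
    (hst : s ≤ t) (hs : e + 1 ≤ u s) (ht : u t ≤ e) :
    ∃ j, s ≤ j ∧ j < t ∧ u j = e + 1 ∧ u (j + 1) = e := by
  induction t with
  | zero =>
      have : s = 0 := by omega
      subst this; omega
  | succ t ih =>
      have hsle : s ≤ t := by
        rcases Nat.lt_or_ge s (t + 1) with h | h
        · omega
        · have : s = t + 1 := by omega
          subst this; omega
      by_cases hte : u t ≤ e
      · obtain ⟨j, h1, h2, h3, h4⟩ := ih (fun j hj hj' => hstep j hj (by omega)) hsle hte
        exact ⟨j, h1, by omega, h3, h4⟩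
      · refine ⟨t, hsle, by omega, ?_, ?_⟩ <;>
        · rcases hstep t hsle (by omega) with h | h <;> omega

lemma cross_exists (u : ℕ → ℤ) (m : ℕ) (e : ℤ)
    (hstep : ∀ j, j < m → u (j + 1) = u j + 1 ∨ u (j + 1) = u j - 1)
    (s t : ℕ) (hs : s ≤ m) (ht : t ≤ m) (hus : u s ≤ e) (hut : e + 1 ≤ u t) :
    ∃ j, j < m ∧ min (u j) (u (j + 1)) = e := by
  rcases le_or_gt s t with h | h
  · obtain ⟨j, h1, h2, h3, h4⟩ := ivt_up u s t e
      (fun j hj hj' => hstep j (by omega)) h hus hut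
    exact ⟨j, by omega, by rw [h3, h4]; omega⟩
  · obtain ⟨j, h1, h2, h3, h4⟩ := ivt_down u t s e
      (fun j hj hj' => hstep j (by omega)) (by omega) hut hus
    exact ⟨j, by omega, by rw [h3, h4]; omega⟩

open Finset in
lemma cross_parity (u : ℕ → ℤ) (m : ℕ)
    (hstep : ∀ j, j < m → u (j + 1) = u j + 1 ∨ u (j + 1) = u j - 1) (e : ℤ) :
    (((range m).filter fun j => u j = e ∧ u (j + 1) = e + 1).card : ℤ)
      - ((range m).filter (fun j => u j = e + 1 ∧ u (j + 1) = e)).card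
    = (if e < u m then 1 else 0) - (if e < u 0 then 1 else 0) := by
  rw [← Finset.sum_boole, ← Finset.sum_boole, ← Finset.sum_sub_distrib]
  rw [← Finset.sum_range_sub (fun j => if e < u j then (1 : ℤ) else 0) m]
  apply Finset.sum_congr rfl
  intro j hj
  rw [Finset.mem_range] at hj
  rcases hstep j hj with h | h <;> rw [h] <;> split_ifs <;> omega

open Finset in
lemma card_min_filter (u : ℕ → ℤ) (m : ℕ)
    (hstep : ∀ j, j < m → u (j + 1) = u j + 1 ∨ u (j + 1) = u j - 1) (e : ℤ) :
    ((range m).filter fun j => min (u j) (u (j + 1)) = e).card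
      = ((range m).filter fun j => u j = e ∧ u (j + 1) = e + 1).card
        + ((range m).filter (fun j => u j = e + 1 ∧ u (j + 1) = e)).card := by
  rw [← Finset.card_union_of_disjoint]
  · congr 1
    rw [← Finset.filter_or]
    apply Finset.filter_congr
    intro j hj
    rw [Finset.mem_range] at hj
    rcases hstep j hj with h | h <;> rw [h] <;> constructor <;> intro hh <;> simp at hh ⊢ <;> omega
  · rw [Finset.disjoint_left]
    intro j hj hj'
    rw [Finset.mem_filter] at hj hj'
    omega

open Finset in
lemma count_lower (u : ℕ → ℤ) (m : ℕ)
    (hstep : ∀ j, j < m → u (j + 1) = u j + 1 ∨ u (j + 1) = u j - 1)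
    (A B : ℤ) (hA : ∀ j, j ≤ m → A ≤ u j) (hB : ∀ j, j ≤ m → u j ≤ B)
    (hcross : ∀ e, A ≤ e → e < B → ∃ j, j < m ∧ min (u j) (u (j + 1)) = e) :
    (Finset.Icc A (B - 1)).card
      + ((Finset.Icc A (B - 1)).filter fun e => (e < u m ↔ e < u 0)).card ≤ m := by
  have hmem : ∀ j ∈ range m, min (u j) (u (j + 1)) ∈ Finset.Icc A (B - 1) := by
    intro j hj
    rw [Finset.mem_range] at hj
    rw [Finset.mem_Icc]
    constructor
    · exact le_min (hA j (by omega)) (hA (j + 1) (by omega))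
    · rcases hstep j hj with h | h
      · rw [h]; have := hB (j + 1) (by omega); omega
      · rw [h]; have := hB j (by omega); omega
  have hcard := Finset.card_eq_sum_card_fiberwise hmem
  rw [Finset.card_range] at hcard
  have hpt : ∀ e ∈ Finset.Icc A (B - 1),
      (if (e < u m ↔ e < u 0) then 2 else 1)
        ≤ ((range m).filter fun j => min (u j) (u (j + 1)) = e).card := by
    intro e he
    rw [Finset.mem_Icc] at he
    obtain ⟨j, hj, hje⟩ := hcross e he.1 (by omega)
    have hpos : 0 < ((range m).filter fun j => min (u j) (u (j + 1)) = e).card := by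
      rw [Finset.card_pos]
      exact ⟨j, Finset.mem_filter.mpr ⟨Finset.mem_range.mpr hj, hje⟩⟩
    by_cases hbad : (e < u m ↔ e < u 0)
    · rw [if_pos hbad]
      have hpar := cross_parity u m hstep e
      rw [if_congr hbad rfl rfl, sub_self] at hpar
      rw [card_min_filter u m hstep e] at hpos ⊢
      omega
    · rw [if_neg hbad]; omega
  calc (Finset.Icc A (B - 1)).card
      + ((Finset.Icc A (B - 1)).filter fun e => (e < u m ↔ e < u 0)).card
      = ∑ e ∈ Finset.Icc A (B - 1), (if (e < u m ↔ e < u 0) then 2 else 1) := by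
        rw [Finset.sum_ite, Finset.sum_const, Finset.sum_const]
        have := Finset.card_filter_add_card_filter_not
          (s := Finset.Icc A (B - 1)) (p := fun e => (e < u m ↔ e < u 0))
        simp only [smul_eq_mul]
        omega
    _ ≤ ∑ e ∈ Finset.Icc A (B - 1),
          ((range m).filter fun j => min (u j) (u (j + 1)) = e).card :=
        Finset.sum_le_sum hpt
    _ = m := hcard.symm

set_option maxHeartbeats 2000000 in
open Finset in
lemma lower_main (hn : 2 ≤ n) (x y : Set (ZMod n)) (k l : ZMod n)
    (p₁ p₂ : ℕ) (hp₁pos : 1 ≤ p₁) (hp₁le : p₁ ≤ n - 1)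
    (hp₁ : (p₁ : ZMod n) = l - k) (hp₂ : p₂ = n - p₁)
    (g₁ g₂ : ℕ)
    (hg₁ : g₁ = sSup {d | ∃ i j : ℕ, i < j ∧ j ≤ p₁ ∧ d = j - i ∧
      ∀ m : ℕ, i < m → m < j → (k + (m : ZMod n)) ∉ x ∆ y})
    (hg₂ : g₂ = sSup {d | ∃ i j : ℕ, i < j ∧ j ≤ p₂ ∧ d = j - i ∧
      ∀ m : ℕ, i < m → m < j → (k - (m : ZMod n)) ∉ x ∆ y})
    (w : List (Lamp n))
    (hw : ∀ s ∈ w, s ∈ ({lampT n, lampTA n} : Set (Lamp n)) ∨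
      ∃ u ∈ ({lampT n, lampTA n} : Set (Lamp n)), s = lampInv u)
    (hfold : (y, l) = List.foldl lampMul (x, k) w) :
    min (p₁ + 2 * (p₂ - g₂)) (p₂ + 2 * (p₁ - g₁)) ≤ w.length := by
  have hnz : NeZero n := ⟨by omega⟩
  -- bounds on the gaps
  have hbdd₁ : BddAbove {d | ∃ i j : ℕ, i < j ∧ j ≤ p₁ ∧ d = j - i ∧
      ∀ m : ℕ, i < m → m < j → (k + (m : ZMod n)) ∉ x ∆ y} := by
    refine ⟨p₁, ?_⟩
    rintro d ⟨i, j, hij, hjp, rfl, -⟩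
    omega
  have hbdd₂ : BddAbove {d | ∃ i j : ℕ, i < j ∧ j ≤ p₂ ∧ d = j - i ∧
      ∀ m : ℕ, i < m → m < j → (k - (m : ZMod n)) ∉ x ∆ y} := by
    refine ⟨p₂, ?_⟩
    rintro d ⟨i, j, hij, hjp, rfl, -⟩
    omega
  have hg₁ge : 1 ≤ g₁ := by
    rw [hg₁]
    exact le_csSup hbdd₁ ⟨0, 1, by omega, hp₁pos, by omega,
      fun m h1 h2 => absurd h2 (by omega)⟩
  have hg₂ge : 1 ≤ g₂ := by
    rw [hg₂]
    exact le_csSup hbdd₂ ⟨0, 1, by omega, by omega, by omega,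
      fun m h1 h2 => absurd h2 (by omega)⟩
  have hg₁le : g₁ ≤ p₁ := by
    rw [hg₁]
    refine csSup_le ⟨1, 0, 1, by omega, hp₁pos, by omega,
      fun m h1 h2 => absurd h2 (by omega)⟩ ?_
    rintro d ⟨i, j, hij, hjp, rfl, -⟩; omega
  have hg₂le : g₂ ≤ p₂ := by
    rw [hg₂]
    refine csSup_le ⟨1, 0, 1, by omega, by omega, by omega,
      fun m h1 h2 => absurd h2 (by omega)⟩ ?_
    rintro d ⟨i, j, hij, hjp, rfl, -⟩; omega
  obtain ⟨M, rfl⟩ := exists_moves w hw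
  rw [List.length_map]
  set m := M.length with hm
  set u : ℕ → ℤ := Pf M with hu
  have hu0 : u 0 = 0 := by simp [hu, Pf]
  have hustep : ∀ j, ∀ hj : j < m, u (j + 1) = u j + mdir (M.get ⟨j, hj⟩).1 := by
    intro j hj
    have h2 : ((M.map fun q => mdir q.1).take (j + 1)).sum
        = ((M.map fun q => mdir q.1).take j).sum + mdir (M.get ⟨j, hj⟩).1 := by
      rw [List.sum_take_succ _ j (by simpa using hj)]
      congr 1
      simp
    simp only [hu, Pf, List.map_take]
    exact h2
  have hstep : ∀ j, j < m → u (j + 1) = u j + 1 ∨ u (j + 1) = u j - 1 := by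
    intro j hj
    rw [hustep j hj]
    rcases (M.get ⟨j, hj⟩).1 with _ | _
    · right; simp [mdir]; ring
    · left; simp [mdir]
  set T : ℤ := u m with hT
  have hl : l = k + ((T : ℤ) : ZMod n) := by
    have h1 := foldl_enc_snd M x k
    rw [← hfold] at h1
    have h2 : msum M = T := by
      simp only [hT, hu, Pf, msum, hm, List.take_length]
    rw [← h2]
    exact h1
  -- the image of positions
  have hne : ((range (m + 1)).image u).Nonempty := ⟨u 0, mem_image.mpr ⟨0, by simp, rfl⟩⟩
  set A : ℤ := ((range (m + 1)).image u).min' hne with hA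
  set B : ℤ := ((range (m + 1)).image u).max' hne with hB
  have hAle : ∀ j, j ≤ m → A ≤ u j := fun j hj =>
    Finset.min'_le _ _ (mem_image.mpr ⟨j, mem_range.mpr (by omega), rfl⟩)
  have hBle : ∀ j, j ≤ m → u j ≤ B := fun j hj =>
    Finset.le_max' _ _ (mem_image.mpr ⟨j, mem_range.mpr (by omega), rfl⟩)
  obtain ⟨jA, hjA, hjAval⟩ : ∃ jA, jA ≤ m ∧ u jA = A := by
    have := Finset.min'_mem _ hne
    rw [mem_image] at this
    obtain ⟨jA, hjA, hval⟩ := this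
    exact ⟨jA, by simpa using Nat.lt_succ_iff.mp (mem_range.mp hjA), hval⟩
  obtain ⟨jB, hjB, hjBval⟩ : ∃ jB, jB ≤ m ∧ u jB = B := by
    have := Finset.max'_mem _ hne
    rw [mem_image] at this
    obtain ⟨jB, hjB, hval⟩ := this
    exact ⟨jB, by simpa using Nat.lt_succ_iff.mp (mem_range.mp hjB), hval⟩
  have hA0 : A ≤ 0 := hu0 ▸ hAle 0 (by omega)
  have hB0 : 0 ≤ B := hu0 ▸ hBle 0 (by omega)
  have hAT : A ≤ T := hAle m le_rfl
  have hBT : T ≤ B := hBle m le_rfl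
  have hcross : ∀ e, A ≤ e → e < B → ∃ j, j < m ∧ min (u j) (u (j + 1)) = e := by
    intro e he1 he2
    exact cross_exists u m e hstep jA jB hjA hjB (by omega) (by omega)
  have hcount := count_lower u m hstep A B hAle hBle hcross
  have hIcc : (Finset.Icc A (B - 1)).card = (B - A).toNat := by
    rw [Int.card_Icc]; congr 1; ring
  clear_value T A B
  -- every lamp in the symmetric difference is toggled somewhere
  have htog : ∀ p : ZMod n, p ∈ x ∆ y → ∃ e : ℤ, A ≤ e ∧ e ≤ B - 1 ∧
      p = k + ((e + 1 : ℤ) : ZMod n) := by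
    intro p hp
    have hmem : p ∈ togSet k M := by
      by_contra hnot
      have h2 := mem_foldl_of_not_togSet M x k p hnot
      rw [← hfold] at h2
      rw [Set.mem_symmDiff] at hp
      simp only at h2
      tauto
    obtain ⟨j, hj, hb, hpe⟩ := togSet_char M k p hmem
    refine ⟨min (u j) (u (j + 1)), le_min (hAle j (by omega)) (hAle (j + 1) (by omega)), ?_, ?_⟩
    · have h1 := hBle (j + 1) (by omega)
      have h2 := hBle j (by omega)
      rcases hstep j hj with h | h <;> omega
    · have hev := hustep j hj
      have key : (Pf M j + toffZ ((M.get ⟨j, hj⟩).1) : ℤ) = min (u j) (u (j + 1)) + 1 := by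
        rcases hd : (M.get ⟨j, hj⟩).1 with _ | _ <;> rw [hd] at hev <;>
          simp only [mdir, toffZ, if_true, if_neg Bool.false_ne_true] at hev ⊢ <;>
          simp only [← hu] <;> omega
      rw [hpe, key]
  -- congruence class of T
  have hdvdT : ∃ W : ℤ, T = p₁ + n * W := by
    have h0 : ((T - p₁ : ℤ) : ZMod n) = 0 := by
      push_cast
      rw [hp₁]
      rw [hl]
      ring
    obtain ⟨W, hW⟩ := (ZMod.intCast_zmod_eq_zero_iff_dvd _ n).mp h0
    exact ⟨W, by omega⟩
  obtain ⟨W, hW⟩ := hdvdT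
  have hcase : W ≥ 1 ∨ W = 0 ∨ W = -1 ∨ W ≤ -2 := by omega
  have hnn : (2 : ℤ) ≤ n := by exact_mod_cast hn
  have hp₁n : (p₁ : ℤ) ≤ n - 1 := by
    have : (p₁ : ℕ) ≤ n - 1 := hp₁le
    omega
  rcases hcase with hWc | hWc | hWc | hWc
  · -- T ≥ p₁ + n : very long walk
    have : (B - A).toNat ≤ m := by omega
    have hTn : (p₁ : ℤ) + n ≤ T := by
      have h2 : (n : ℤ) * 1 ≤ n * W := mul_le_mul_of_nonneg_left hWc (by omega)
      omega
    omega
  · -- W = 0 : T = p₁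
    subst hWc
    have hTp : T = (p₁ : ℤ) := by omega
    -- extra cost beyond the direct path
    have hbadsub : Finset.Icc A (-1) ∪ Finset.Icc T (B - 1)
        ⊆ (Finset.Icc A (B - 1)).filter fun e => (e < u m ↔ e < u 0) := by
      intro e he
      simp only [Finset.mem_union, Finset.mem_Icc] at he
      simp only [Finset.mem_filter, Finset.mem_Icc, ← hT, hu0]
      constructor
      · omega
      · constructor <;> intro h <;> omega
    have hbadcard : (0 - A).toNat + (B - T).toNat
        ≤ ((Finset.Icc A (B - 1)).filter fun e => (e < u m ↔ e < u 0)).card := by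
      have hdisj : Disjoint (Finset.Icc A (-1)) (Finset.Icc T (B - 1)) := by
        rw [Finset.disjoint_left]
        intro e he he'
        rw [Finset.mem_Icc] at he he'
        omega
      calc (0 - A).toNat + (B - T).toNat
          = (Finset.Icc A (-1)).card + (Finset.Icc T (B - 1)).card := by
            rw [Int.card_Icc, Int.card_Icc]
            have h1 : (-1 + 1 - A : ℤ) = 0 - A := by ring
            have h2 : (B - 1 + 1 - T : ℤ) = B - T := by ring
            rw [h1, h2]
        _ = (Finset.Icc A (-1) ∪ Finset.Icc T (B - 1)).card :=
            (Finset.card_union_of_disjoint hdisj).symm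
        _ ≤ _ := Finset.card_le_card hbadsub
    set a : ℕ := (0 - A).toNat with ha
    set b : ℕ := (B - T).toNat with hb
    have hmge : p₁ + 2 * (a + b) ≤ m := by omega
    rcases Nat.lt_or_ge (a + b) p₂ with hab | hab
    · -- coverage of the backward arc
      have hcov : ∀ m' : ℕ, a ≤ m' → m' + b + 1 ≤ p₂ → (k - (m' : ZMod n)) ∉ x ∆ y := by
        intro m' h1 h2 hmem
        obtain ⟨e, he1, he2, hpe⟩ := htog _ hmem
        have h0 : ((e + 1 + m' : ℤ) : ZMod n) = 0 := by
          have hpe2 := hpe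
          push_cast at hpe2
          push_cast
          linear_combination -hpe2
        have hdvd := (ZMod.intCast_zmod_eq_zero_iff_dvd _ n).mp h0
        have hpos : 0 < e + 1 + m' := by omega
        have := Int.le_of_dvd hpos hdvd
        have hm'z : (m' : ℤ) + b + 1 ≤ (p₂ : ℤ) := by exact_mod_cast h2
        have hp₂z : (p₂ : ℤ) = n - p₁ := by
          rw [hp₂]; push_cast [Nat.cast_sub (show p₁ ≤ n by omega)]; ring
        omega
      have hgapel : p₂ - (a + b) ≤ g₂ := by
        rw [hg₂]
        rcases Nat.eq_zero_or_pos a with ha0 | ha0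
        · have : (p₂ - b : ℕ) ≤ sSup _ := le_csSup hbdd₂
            ⟨0, p₂ - b, by omega, by omega, by omega,
              fun m' hm1 hm2 => hcov m' (by omega) (by omega)⟩
          omega
        · have : (p₂ - b - (a - 1) : ℕ) ≤ sSup _ := le_csSup hbdd₂
            ⟨a - 1, p₂ - b, by omega, by omega, by omega,
              fun m' hm1 hm2 => hcov m' (by omega) (by omega)⟩
          omega
      omega
    · omega
  · -- W = -1 : T = p₁ - n
    subst hWc
    have hTp : T = (p₁ : ℤ) - n := by omega
    have hbadsub : Finset.Icc A (T - 1) ∪ Finset.Icc 0 (B - 1)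
        ⊆ (Finset.Icc A (B - 1)).filter fun e => (e < u m ↔ e < u 0) := by
      intro e he
      simp only [Finset.mem_union, Finset.mem_Icc] at he
      simp only [Finset.mem_filter, Finset.mem_Icc, ← hT, hu0]
      constructor
      · omega
      · constructor <;> intro h <;> omega
    have hbadcard : (T - A).toNat + (B - 0).toNat
        ≤ ((Finset.Icc A (B - 1)).filter fun e => (e < u m ↔ e < u 0)).card := by
      have hdisj : Disjoint (Finset.Icc A (T - 1)) (Finset.Icc 0 (B - 1)) := by
        rw [Finset.disjoint_left]
        intro e he he'
        rw [Finset.mem_Icc] at he he'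
        omega
      calc (T - A).toNat + (B - 0).toNat
          = (Finset.Icc A (T - 1)).card + (Finset.Icc 0 (B - 1)).card := by
            rw [Int.card_Icc, Int.card_Icc]
            have h1 : (T - 1 + 1 - A : ℤ) = T - A := by ring
            have h2 : (B - 1 + 1 - 0 : ℤ) = B - 0 := by ring
            rw [h1, h2]
        _ = (Finset.Icc A (T - 1) ∪ Finset.Icc 0 (B - 1)).card :=
            (Finset.card_union_of_disjoint hdisj).symm
        _ ≤ _ := Finset.card_le_card hbadsub
    set a : ℕ := (T - A).toNat with ha
    set b : ℕ := (B - 0).toNat with hb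
    have hp₂z : (p₂ : ℤ) = n - p₁ := by
      rw [hp₂]; push_cast [Nat.cast_sub (show p₁ ≤ n by omega)]; ring
    have hmge : p₂ + 2 * (a + b) ≤ m := by omega
    rcases Nat.lt_or_ge (a + b) p₁ with hab | hab
    · have hcov : ∀ m' : ℕ, b + 1 ≤ m' → m' + a ≤ p₁ → (k + (m' : ZMod n)) ∉ x ∆ y := by
        intro m' h1 h2 hmem
        obtain ⟨e, he1, he2, hpe⟩ := htog _ hmem
        have h0 : ((e + 1 - m' : ℤ) : ZMod n) = 0 := by
          have hpe2 := hpe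
          push_cast at hpe2
          push_cast
          linear_combination -hpe2
        have hdvd := (ZMod.intCast_zmod_eq_zero_iff_dvd _ n).mp h0
        have hneg : e + 1 - m' < 0 := by omega
        have hgt : -(n : ℤ) < e + 1 - m' := by
          have hm'z : (m' : ℤ) + a ≤ (p₁ : ℤ) := by exact_mod_cast h2
          omega
        rcases hdvd with ⟨c, hc⟩
        rcases (by omega : c = 0 ∨ c ≤ -1 ∨ 1 ≤ c) with rfl | hcc | hcc
        · omega
        · have h3 : (n : ℤ) * c ≤ n * (-1) := mul_le_mul_of_nonneg_left hcc (by omega)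
          omega
        · have h3 : (n : ℤ) * 1 ≤ n * c := mul_le_mul_of_nonneg_left hcc (by omega)
          omega
      have hgapel : p₁ - (a + b) ≤ g₁ := by
        rw [hg₁]
        have : (p₁ - a - b : ℕ) ≤ sSup _ := le_csSup hbdd₁
          ⟨b, p₁ - a, by omega, by omega, by omega,
            fun m' hm1 hm2 => hcov m' (by omega) (by omega)⟩
        omega
      omega
    · omega
  · -- T ≤ p₁ - 2n
    have : (B - A).toNat ≤ m := by omega
    have hTn : T ≤ (p₁ : ℤ) - 2 * n := by
      have h2 : (n : ℤ) * W ≤ n * (-2) := mul_le_mul_of_nonneg_left hWc (by omega)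
      omega
    omega
end LampAux
end LampAux

open LampAux in
/-- Two-sided estimate for the word distance `ρ((x,k),(y,l))` in terms of the lengths
`p₁, p₂` of the two paths from `k` to `l` on the cycle and the largest gaps `g₁, g₂`
(free of `x △ y`) in these paths. The path `Q₁` is `k, k+1, ..., k+p₁ = l` and the path
`Q₂` is `k, k-1, ..., k-p₂ = l`; gaps are measured as distances `j - i` between indices
`i < j ≤ pᵢ` such that no vertex strictly between them lies in `x △ y`. -/
theorem lampDist_two_sided_estimate
    (n : ℕ) (hn : 2 ≤ n) (x y : Set (ZMod n)) (k l : ZMod n) (hkl : k ≠ l)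
    (p₁ p₂ : ℕ) (hp₁pos : 1 ≤ p₁) (hp₁le : p₁ ≤ n - 1)
    (hp₁ : (p₁ : ZMod n) = l - k) (hp₂ : p₂ = n - p₁)
    (g₁ g₂ : ℕ)
    (hg₁ : g₁ = sSup {d | ∃ i j : ℕ, i < j ∧ j ≤ p₁ ∧ d = j - i ∧
      ∀ m : ℕ, i < m → m < j → (k + (m : ZMod n)) ∉ x ∆ y})
    (hg₂ : g₂ = sSup {d | ∃ i j : ℕ, i < j ∧ j ≤ p₂ ∧ d = j - i ∧
      ∀ m : ℕ, i < m → m < j → (k - (m : ZMod n)) ∉ x ∆ y}) :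
    min (p₁ + 2 * (p₂ - g₂)) (p₂ + 2 * (p₁ - g₁)) ≤ lampDist n (x, k) (y, l) ∧
    lampDist n (x, k) (y, l) ≤ min (p₁ + 2 * (p₂ - g₂)) (p₂ + 2 * (p₁ - g₁)) + 2 := by
  have hnz : NeZero n := ⟨by omega⟩
  have hp₂pos : 1 ≤ p₂ := by omega
  have hbdd₁ : BddAbove {d | ∃ i j : ℕ, i < j ∧ j ≤ p₁ ∧ d = j - i ∧
      ∀ m : ℕ, i < m → m < j → (k + (m : ZMod n)) ∉ x ∆ y} := by
    refine ⟨p₁, ?_⟩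
    rintro d ⟨i, j, hij, hjp, rfl, -⟩
    omega
  have hbdd₂ : BddAbove {d | ∃ i j : ℕ, i < j ∧ j ≤ p₂ ∧ d = j - i ∧
      ∀ m : ℕ, i < m → m < j → (k - (m : ZMod n)) ∉ x ∆ y} := by
    refine ⟨p₂, ?_⟩
    rintro d ⟨i, j, hij, hjp, rfl, -⟩
    omega
  have hg1mem : g₁ ∈ {d | ∃ i j : ℕ, i < j ∧ j ≤ p₁ ∧ d = j - i ∧
      ∀ m : ℕ, i < m → m < j → (k + (m : ZMod n)) ∉ x ∆ y} := by
    rw [hg₁]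
    exact Nat.sSup_mem ⟨1, 0, 1, by omega, hp₁pos, by omega,
      fun m h1 h2 => absurd h2 (by omega)⟩ hbdd₁
  have hg2mem : g₂ ∈ {d | ∃ i j : ℕ, i < j ∧ j ≤ p₂ ∧ d = j - i ∧
      ∀ m : ℕ, i < m → m < j → (k - (m : ZMod n)) ∉ x ∆ y} := by
    rw [hg₂]
    exact Nat.sSup_mem ⟨1, 0, 1, by omega, hp₂pos, by omega,
      fun m h1 h2 => absurd h2 (by omega)⟩ hbdd₂
  obtain ⟨i₁, j₁, hij₁, hj₁p, hd₁, hgap₁⟩ := hg1mem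
  obtain ⟨i₂, j₂, hij₂, hj₂p, hd₂, hgap₂⟩ := hg2mem
  have hlk : k + ((p₁ : ℕ) : ZMod n) = l := by rw [hp₁]; ring
  obtain ⟨w₁, hlen₁, hw₁, hfold₁⟩ := upper1 hn x y k p₁ hp₁pos hp₁le i₁ j₁ hij₁ hj₁p hgap₁
  obtain ⟨w₂, hlen₂, hw₂, hfold₂⟩ := upper2 hn x y k p₁ hp₁pos hp₁le i₂ j₂ hij₂
    (by omega) hgap₂
  rw [hlk] at hfold₁ hfold₂
  have hub₁ : lampDist n (x, k) (y, l) ≤ (n - p₁) + 2 * (p₁ - (j₁ - i₁)) + 2 := by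
    rw [lampDist, wordDist]
    exact Nat.sInf_le ⟨w₁, hlen₁, hw₁, hfold₁⟩
  have hub₂ : lampDist n (x, k) (y, l) ≤ p₁ + 2 * ((n - p₁) - (j₂ - i₂)) + 2 := by
    rw [lampDist, wordDist]
    exact Nat.sInf_le ⟨w₂, hlen₂, hw₂, hfold₂⟩
  constructor
  · rw [lampDist, wordDist]
    refine le_csInf ⟨w₁.length, w₁, rfl, hw₁, hfold₁⟩ ?_
    rintro b ⟨w, hlen, hw, hfold⟩
    rw [← hlen]
    exact lower_main hn x y k l p₁ p₂ hp₁pos hp₁le hp₁ hp₂ g₁ g₂ hg₁ hg₂ w hw hfold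
  · omega
end

section
/- For every integer n ≥ 2 and all (x,k), (y,l) ∈ G_n = Z_2 ≀ Z_n: ρ((x,k),(y,l)) ≥ τ − 1, where τ is the minimal number of vertices of an arc of Z_n containing the set {k, l} ∪ (x △ y). -/
open scoped symmDiff

-- ### auxiliary

def genSet (n : ℕ) : Set (Lamp n) := {lampT n, lampTA n}

def GoodWord (n : ℕ) (w : List (Lamp n)) : Prop :=
  ∀ s ∈ w, s ∈ genSet n ∨ ∃ g ∈ genSet n, s = lampInv g

lemma lampTA_eq (n : ℕ) : lampTA n = ({1}, 1) := by
  simp [lampTA, lampMul, lampT, lampA, bot_symmDiff]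

lemma lampMul_t {n : ℕ} (u : Lamp n) : lampMul u (lampT n) = (u.1, u.2 + 1) := by
  simp [lampMul, lampT, symmDiff_bot]

lemma lampMul_tinv {n : ℕ} (u : Lamp n) :
    lampMul u (lampInv (lampT n)) = (u.1, u.2 - 1) := by
  simp [lampMul, lampInv, lampT, symmDiff_bot, sub_eq_add_neg]

lemma lampMul_ta {n : ℕ} (u : Lamp n) :
    lampMul u (lampTA n) = (u.1 ∆ {u.2 + 1}, u.2 + 1) := by
  rw [lampTA_eq]; simp [lampMul]

lemma lampMul_tainv {n : ℕ} (u : Lamp n) :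
    lampMul u (lampInv (lampTA n)) = (u.1 ∆ {u.2}, u.2 - 1) := by
  rw [lampTA_eq]; simp [lampMul, lampInv, sub_eq_add_neg]

lemma step_spec {n : ℕ} (u s : Lamp n)
    (hs : s ∈ genSet n ∨ ∃ g ∈ genSet n, s = lampInv g) :
    ((lampMul u s).2 = u.2 + 1 ∨ (lampMul u s).2 = u.2 - 1) ∧
      u.1 ∆ (lampMul u s).1 ⊆ {u.2, (lampMul u s).2} := by
  rcases hs with hs | ⟨g, hg, rfl⟩
  · rcases hs with rfl | rfl
    · rw [lampMul_t]; simp [symmDiff_self]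
    · rw [lampMul_ta]
      refine ⟨Or.inl rfl, ?_⟩
      rw [symmDiff_symmDiff_cancel_left]
      intro z hz; right; exact hz
  · rcases hg with rfl | rfl
    · rw [lampMul_tinv]; simp [symmDiff_self]
    · rw [lampMul_tainv]
      refine ⟨Or.inr rfl, ?_⟩
      rw [symmDiff_symmDiff_cancel_left]
      intro z hz; left; exact hz

lemma arcSet_mono {n : ℕ} (a : ZMod n) (m : ℕ) : arcSet n a m ⊆ arcSet n a (m + 1) := by
  rintro z ⟨i, hi, rfl⟩; exact ⟨i, by omega, rfl⟩

lemma arcSet_shift {n : ℕ} (a : ZMod n) (m : ℕ) :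
    arcSet n a m ⊆ arcSet n (a - 1) (m + 1) := by
  rintro z ⟨i, hi, rfl⟩
  exact ⟨i + 1, by omega, by push_cast; ring⟩

lemma mem_arcSet_of_big {n : ℕ} (hn : 2 ≤ n) (a : ZMod n) (m : ℕ) (hm : n - 1 ≤ m)
    (z : ZMod n) : z ∈ arcSet n a m := by
  haveI : NeZero n := ⟨by omega⟩
  refine ⟨(z - a).val, by have := ZMod.val_lt (z - a); omega, ?_⟩
  simp [ZMod.natCast_val, ZMod.cast_id]

/-- Main lower-bound lemma: the path traced by a word stays in a small arc. -/
lemma arc_of_word {n : ℕ} (hn : 2 ≤ n) :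
    ∀ (w : List (Lamp n)) (u : Lamp n), GoodWord n w →
      ∃ a : ZMod n, ∃ m : ℕ, m ≤ w.length ∧ m ≤ n - 1 ∧
        ({u.2, (w.foldl lampMul u).2} ∪ (u.1 ∆ (w.foldl lampMul u).1)) ⊆ arcSet n a m := by
  intro w
  induction w with
  | nil =>
    intro u _
    refine ⟨u.2, 0, le_refl _, by omega, ?_⟩
    intro z hz
    rcases hz with hz | hz
    · rcases hz with rfl | rfl <;> exact ⟨0, le_refl _, by simp⟩
    · simp [symmDiff_self] at hz
  | cons s w ih =>
    intro u hw
    have hs : s ∈ genSet n ∨ ∃ g ∈ genSet n, s = lampInv g := hw s List.mem_cons_self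
    have hw' : GoodWord n w := fun g hg => hw g (List.mem_cons_of_mem _ hg)
    set u' := lampMul u s with hu'
    obtain ⟨a, m, hm1, hm2, hsub⟩ := ih u' hw'
    set v := w.foldl lampMul u' with hv
    have hfold : (s :: w).foldl lampMul u = v := rfl
    obtain ⟨hstep, htog⟩ := step_spec u s hs
    have hkey : ∀ a' m', arcSet n a m ⊆ arcSet n a' m' → u.2 ∈ arcSet n a' m' →
        ({u.2, v.2} ∪ (u.1 ∆ v.1)) ⊆ arcSet n a' m' := by
      intro a' m' hincl hu2 z hz
      rcases hz with hz | hz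
      · rcases hz with rfl | rfl
        · exact hu2
        · exact hincl (hsub (Or.inl (Or.inr rfl)))
      · have := symmDiff_triangle u.1 u'.1 v.1 hz
        rcases this with h | h
        · rcases htog h with rfl | rfl
          · exact hu2
          · exact hincl (hsub (Or.inl (Or.inl rfl)))
        · exact hincl (hsub (Or.inr h))
    by_cases hu2 : u.2 ∈ arcSet n a m
    · exact ⟨a, m, by simp; omega, hm2, hfold ▸ hkey a m (fun _ h => h) hu2⟩
    · have hmlt : m < n - 1 := by
        rcases lt_or_ge m (n-1) with h | h
        · exact h
        · exact absurd (mem_arcSet_of_big hn a m h u.2) hu2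
      have hu'2 : u'.2 ∈ arcSet n a m := hsub (Or.inl (Or.inl rfl))
      obtain ⟨i, hi, hieq⟩ := hu'2
      rcases hstep with h1 | h1
      · -- u'.2 = u.2 + 1, extend left
        refine ⟨a - 1, m + 1, by simp; omega, by omega, hfold ▸ hkey (a-1) (m+1)
          (arcSet_shift a m) ⟨i, by omega, ?_⟩⟩
        have : u.2 = u'.2 - 1 := by rw [h1]; ring
        rw [this, hieq]; ring
      · -- u'.2 = u.2 - 1, extend right
        refine ⟨a, m + 1, by simp; omega, by omega, hfold ▸ hkey a (m+1)
          (arcSet_mono a m) ⟨i + 1, by omega, ?_⟩⟩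
        have : u.2 = u'.2 + 1 := by rw [h1]; ring
        rw [this, hieq]; push_cast; ring

-- ### Nonemptiness: the generators generate

def Reach (n : ℕ) (u v : Lamp n) : Prop :=
  ∃ w : List (Lamp n), GoodWord n w ∧ v = w.foldl lampMul u

lemma reach_trans {n : ℕ} {u v z : Lamp n} (h1 : Reach n u v) (h2 : Reach n v z) :
    Reach n u z := by
  obtain ⟨w1, hw1, rfl⟩ := h1
  obtain ⟨w2, hw2, rfl⟩ := h2
  refine ⟨w1 ++ w2, ?_, List.foldl_append.symm⟩
  intro s hs
  rcases List.mem_append.1 hs with h | h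
  · exact hw1 s h
  · exact hw2 s h

lemma foldl_replicate_t {n : ℕ} (j : ℕ) (x : Set (ZMod n)) (k : ZMod n) :
    (List.replicate j (lampT n)).foldl lampMul (x, k) = (x, k + j) := by
  induction j generalizing k with
  | zero => simp
  | succ j ih =>
    rw [List.replicate_succ, List.foldl_cons]
    have : lampMul (x, k) (lampT n) = (x, k + 1) := lampMul_t _
    rw [this, ih]
    push_cast; ring_nf

lemma good_replicate_t {n : ℕ} (j : ℕ) : GoodWord n (List.replicate j (lampT n)) := by
  intro s hs
  rw [List.eq_of_mem_replicate hs]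
  exact Or.inl (Or.inl rfl)

lemma reach_pos {n : ℕ} [NeZero n] (x : Set (ZMod n)) (k p : ZMod n) :
    Reach n (x, k) (x, p) := by
  refine ⟨List.replicate (p - k).val (lampT n), good_replicate_t _, ?_⟩
  rw [foldl_replicate_t]
  simp [ZMod.natCast_val, ZMod.cast_id]

lemma reach_toggle {n : ℕ} [NeZero n] (x : Set (ZMod n)) (k p : ZMod n) :
    Reach n (x, k) (x ∆ {p}, k) := by
  refine reach_trans (reach_pos x k (p - 1)) ?_
  refine reach_trans (v := (x ∆ {p}, p)) ⟨[lampTA n], ?_, ?_⟩ (reach_pos _ p k)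
  · intro s hs; simp at hs; subst hs; exact Or.inl (Or.inr rfl)
  · simp only [List.foldl_cons, List.foldl_nil, lampMul_ta]
    rw [sub_add_cancel]

lemma reach_toggle_set {n : ℕ} [NeZero n] (k : ZMod n)
    (d : Set (ZMod n)) : ∀ x : Set (ZMod n), Reach n (x, k) (x ∆ d, k) := by
  refine Set.Finite.induction_on
    (motive := fun d _ => ∀ x : Set (ZMod n), Reach n (x, k) (x ∆ d, k))
    d (Set.toFinite d) ?_ ?_
  · intro x; rw [← Set.bot_eq_empty, symmDiff_bot]; exact ⟨[], fun s hs => by simp at hs, rfl⟩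
  · intro p s hp _ ih x
    have h1 : insert p s = {p} ∆ s := by
      rw [Disjoint.symmDiff_eq_sup (by simpa using hp)]
      exact Set.singleton_union.symm
    rw [h1, ← symmDiff_assoc]
    exact reach_trans (reach_toggle x k p) (ih (x ∆ {p}))

lemma reach_all {n : ℕ} (hn : 2 ≤ n) (u v : Lamp n) : Reach n u v := by
  haveI : NeZero n := ⟨by omega⟩
  obtain ⟨x, k⟩ := u
  obtain ⟨y, l⟩ := v
  have h1 : Reach n (x, k) (x ∆ (x ∆ y), k) := reach_toggle_set k (x ∆ y) x
  rw [symmDiff_symmDiff_cancel_left] at h1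
  exact reach_trans h1 (reach_pos y k l)


/-- `ρ((x,k),(y,l)) ≥ τ - 1`, where `τ` is the minimal number of vertices of an arc of
`Z_n` containing `{k, l} ∪ (x △ y)`. -/
theorem lampDist_ge_minimal_arc
    (n : ℕ) (hn : 2 ≤ n) (x y : Set (ZMod n)) (k l : ZMod n) (τ : ℕ)
    (hτ : τ = sInf {c | ∃ a : ZMod n, ∃ m ≤ n - 1, c = m + 1 ∧
      ({k, l} ∪ (x ∆ y)) ⊆ arcSet n a m}) :
    τ - 1 ≤ lampDist n (x, k) (y, l) := by
  haveI : NeZero n := ⟨by omega⟩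
  rw [lampDist, wordDist]
  apply le_csInf
  · obtain ⟨w, hw, heq⟩ := reach_all hn (x, k) (y, l)
    exact ⟨w.length, w, rfl, hw, heq⟩
  · rintro b ⟨w, hlen, hw, heq⟩
    obtain ⟨a, m, hm1, hm2, hsub⟩ := arc_of_word hn w (x, k) hw
    rw [← heq] at hsub
    have hτle : τ ≤ m + 1 := by
      rw [hτ]
      exact Nat.sInf_le ⟨a, m, hm2, rfl, hsub⟩
    omega
end

section
/- For every integer n ≥ 2 and all (x,k), (y,l) ∈ G_n = Z_2 ≀ Z_n: ρ((x,k),(y,l)) ≤ 2(n − g) + 2, where g is the maximal number of vertices of an arc of Z_n disjoint from the set {k, l} ∪ (x △ y) (and g = 0 if no nonempty arc is disjoint from this set). -/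
open scoped symmDiff

section LampAux

variable {n : ℕ}

lemma LL.mul_T (u : Lamp n) : lampMul u (lampT n) = (u.1, u.2 + 1) := by
  simp [lampMul, lampT]
lemma LL.mul_TA (u : Lamp n) : lampMul u (lampTA n) = (u.1 ∆ {u.2 + 1}, u.2 + 1) := by
  simp [lampMul, lampTA, lampT, lampA]
lemma LL.mul_Tinv (u : Lamp n) : lampMul u (lampInv (lampT n)) = (u.1, u.2 - 1) := by
  simp [lampMul, lampInv, lampT, sub_eq_add_neg]
lemma LL.mul_TAinv (u : Lamp n) : lampMul u (lampInv (lampTA n)) = (u.1 ∆ {u.2}, u.2 - 1) := by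
  simp [lampMul, lampInv, lampTA, lampT, lampA, sub_eq_add_neg]

lemma LL.castinj {i j : ℕ} (hi : i < n) (hj : j < n) (h : (i : ZMod n) = j) : i = j := by
  have h1 := ZMod.val_cast_of_lt hi
  have h2 := ZMod.val_cast_of_lt hj
  rw [h] at h1; omega

lemma LL.symmDiff_singleton {s : Set (ZMod n)} {c : ZMod n} (h : c ∉ s) :
    s ∆ {c} = s ∪ {c} := by
  rw [Set.symmDiff_def]; ext w; by_cases hw : w = c <;> simp [hw, h]

lemma LL.symmDiff_empty_right (z : Set (ZMod n)) : z ∆ (∅ : Set (ZMod n)) = z := by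
  rw [show (∅ : Set (ZMod n)) = ⊥ from rfl, symmDiff_bot]

lemma LL.foldl_repTinv (c : ℕ) (z : Set (ZMod n)) (p : ZMod n) :
    (List.replicate c (lampInv (lampT n))).foldl lampMul (z, p) = (z, p - c) := by
  induction c generalizing p with
  | zero => simp
  | succ c ih =>
    rw [List.replicate_succ, List.foldl_cons, LL.mul_Tinv, ih]
    push_cast; ring_nf

lemma LL.foldl_repT (c : ℕ) (z : Set (ZMod n)) (p : ZMod n) :
    (List.replicate c (lampT n)).foldl lampMul (z, p) = (z, p + c) := by
  induction c generalizing p with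
  | zero => simp
  | succ c ih =>
    rw [List.replicate_succ, List.foldl_cons, LL.mul_T, ih]
    push_cast; ring_nf

lemma LL.foldl_ascend (f : ℕ → Bool) (z : Set (ZMod n)) (p : ZMod n)
    (L : ℕ) (hL : L ≤ n) :
    ((List.range L).map (fun i : ℕ => if f i then lampTA n else lampT n)).foldl
      lampMul (z, p)
    = (z ∆ {w | ∃ i < L, f i = true ∧ w = p + (i : ZMod n) + 1}, p + L) := by
  induction L with
  | zero =>
    have h0 : {w | ∃ i < 0, f i = true ∧ w = p + (i : ZMod n) + 1} = (∅ : Set (ZMod n)) := by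
      ext w; simp
    simp only [List.range_zero, List.map_nil, List.foldl_nil, Nat.cast_zero, add_zero, h0,
      LL.symmDiff_empty_right]
  | succ L ih =>
    rw [List.range_succ, List.map_append, List.foldl_append, ih (by omega)]
    simp only [List.map_cons, List.map_nil, List.foldl_cons, List.foldl_nil]
    have hdist : ∀ i < L, p + (L : ZMod n) + 1 ≠ p + (i : ZMod n) + 1 := by
      intro i hi hEq
      have h2 : (L : ZMod n) = (i : ZMod n) := add_left_cancel (add_right_cancel hEq)
      have := LL.castinj hL (by omega) h2
      omega
    have hpos : p + (L : ZMod n) + 1 = p + ((L + 1 : ℕ) : ZMod n) := by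
      push_cast; ring
    by_cases hc : f L
    · rw [if_pos hc, LL.mul_TA]
      refine Prod.ext ?_ hpos
      show (z ∆ _) ∆ {p + (L : ZMod n) + 1} = _
      rw [symmDiff_assoc]
      congr 1
      rw [LL.symmDiff_singleton (by rintro ⟨i, hi, -, hEq⟩; exact hdist i hi hEq)]
      ext w
      simp only [Set.mem_union, Set.mem_setOf_eq, Set.mem_singleton_iff]
      constructor
      · rintro (⟨i, hi, hfi, rfl⟩ | rfl)
        · exact ⟨i, by omega, hfi, rfl⟩
        · exact ⟨L, by omega, hc, rfl⟩
      · rintro ⟨i, hi, hfi, rfl⟩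
        rcases Nat.lt_succ_iff_lt_or_eq.mp hi with hi' | rfl
        · exact Or.inl ⟨i, hi', hfi, rfl⟩
        · exact Or.inr rfl
    · rw [if_neg hc, LL.mul_T]
      refine Prod.ext ?_ hpos
      show z ∆ _ = z ∆ _
      congr 1
      ext w
      simp only [Set.mem_setOf_eq]
      constructor
      · rintro ⟨i, hi, hfi, rfl⟩; exact ⟨i, by omega, hfi, rfl⟩
      · rintro ⟨i, hi, hfi, rfl⟩
        rcases Nat.lt_succ_iff_lt_or_eq.mp hi with hi' | rfl
        · exact ⟨i, hi', hfi, rfl⟩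
        · exact absurd hfi (by simpa using hc)

lemma LL.foldl_descend (f : ℕ → Bool) (z : Set (ZMod n)) (p : ZMod n)
    (L : ℕ) (hL : L ≤ n) :
    ((List.range L).map
        (fun i : ℕ => if f i then lampInv (lampTA n) else lampInv (lampT n))).foldl
      lampMul (z, p)
    = (z ∆ {w | ∃ i < L, f i = true ∧ w = p - (i : ZMod n)}, p - L) := by
  induction L with
  | zero =>
    have h0 : {w | ∃ i < 0, f i = true ∧ w = p - (i : ZMod n)} = (∅ : Set (ZMod n)) := by
      ext w; simp
    simp only [List.range_zero, List.map_nil, List.foldl_nil, Nat.cast_zero, sub_zero, h0,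
      LL.symmDiff_empty_right]
  | succ L ih =>
    rw [List.range_succ, List.map_append, List.foldl_append, ih (by omega)]
    simp only [List.map_cons, List.map_nil, List.foldl_cons, List.foldl_nil]
    have hdist : ∀ i < L, p - (L : ZMod n) ≠ p - (i : ZMod n) := by
      intro i hi hEq
      rw [sub_eq_add_neg, sub_eq_add_neg] at hEq
      have h2 : (L : ZMod n) = (i : ZMod n) := neg_injective (add_left_cancel hEq)
      have := LL.castinj hL (by omega) h2
      omega
    have hpos : p - (L : ZMod n) - 1 = p - ((L + 1 : ℕ) : ZMod n) := by
      push_cast; ring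
    by_cases hc : f L
    · rw [if_pos hc, LL.mul_TAinv]
      refine Prod.ext ?_ hpos
      show (z ∆ _) ∆ {p - (L : ZMod n)} = _
      rw [symmDiff_assoc]
      congr 1
      rw [LL.symmDiff_singleton (by rintro ⟨i, hi, -, hEq⟩; exact hdist i hi hEq)]
      ext w
      simp only [Set.mem_union, Set.mem_setOf_eq, Set.mem_singleton_iff]
      constructor
      · rintro (⟨i, hi, hfi, rfl⟩ | rfl)
        · exact ⟨i, by omega, hfi, rfl⟩
        · exact ⟨L, by omega, hc, rfl⟩
      · rintro ⟨i, hi, hfi, rfl⟩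
        rcases Nat.lt_succ_iff_lt_or_eq.mp hi with hi' | rfl
        · exact Or.inl ⟨i, hi', hfi, rfl⟩
        · exact Or.inr rfl
    · rw [if_neg hc, LL.mul_Tinv]
      refine Prod.ext ?_ hpos
      show z ∆ _ = z ∆ _
      congr 1
      ext w
      simp only [Set.mem_setOf_eq]
      constructor
      · rintro ⟨i, hi, hfi, rfl⟩; exact ⟨i, by omega, hfi, rfl⟩
      · rintro ⟨i, hi, hfi, rfl⟩
        rcases Nat.lt_succ_iff_lt_or_eq.mp hi with hi' | rfl
        · exact ⟨i, hi', hfi, rfl⟩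
        · exact absurd hfi (by simpa using hc)

lemma LL.lampDist_le {u v : Lamp n} (w : List (Lamp n))
    (hw : ∀ s ∈ w, s = lampT n ∨ s = lampTA n ∨ s = lampInv (lampT n) ∨ s = lampInv (lampTA n))
    (hv : v = w.foldl lampMul u) : lampDist n u v ≤ w.length := by
  apply Nat.sInf_le
  refine ⟨w, rfl, ?_, hv⟩
  intro s hs
  rcases hw s hs with h | h | h | h
  · exact Or.inl (Or.inl h)
  · exact Or.inl (Or.inr h)
  · exact Or.inr ⟨lampT n, Or.inl rfl, h⟩
  · exact Or.inr ⟨lampTA n, Or.inr rfl, h⟩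

open Classical in
lemma LL.master (x y : Set (ZMod n)) (b k l : ZMod n)
    (L ik il : ℕ) (hL1 : 1 ≤ L) (hLn : L ≤ n) (hik : ik < L) (hil : il < L)
    (hk : k = b + (ik : ZMod n)) (hl : l = b + (il : ZMod n))
    (hsub : x ∆ y ⊆ {z | ∃ j < L, z = b + (j : ZMod n)}) :
    lampDist n (x, k) (y, l) ≤ 2 * L := by
  rcases le_or_gt ik il with hord | hord
  · -- route A
    set f : ℕ → Bool := fun i => decide (b + (i : ZMod n) ∈ x ∆ y) with hf
    set wA : List (Lamp n) :=
      List.replicate (ik + 1) (lampInv (lampT n)) ++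
      ((List.range L).map (fun i : ℕ => if f i then lampTA n else lampT n)) ++
      List.replicate (L - 1 - il) (lampInv (lampT n)) with hwA
    have hfold : (y, l) = wA.foldl lampMul (x, k) := by
      rw [hwA, List.foldl_append, List.foldl_append]
      rw [show (List.replicate (ik+1) (lampInv (lampT n))).foldl lampMul (x, k) = (x, b - 1) by
        rw [LL.foldl_repTinv]; rw [hk]; push_cast; ring_nf]
      rw [LL.foldl_ascend f x (b - 1) L hLn, LL.foldl_repTinv]
      have hS : {w | ∃ i < L, f i = true ∧ w = b - 1 + (i : ZMod n) + 1} = x ∆ y := by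
        ext w
        simp only [Set.mem_setOf_eq, hf, decide_eq_true_eq]
        constructor
        · rintro ⟨i, hi, hmem, rfl⟩
          have h' : b - 1 + (i : ZMod n) + 1 = b + (i : ZMod n) := by ring
          rw [h']; exact hmem
        · intro hw
          obtain ⟨j, hj, rfl⟩ := hsub hw
          exact ⟨j, hj, hw, by ring⟩
      rw [hS, symmDiff_symmDiff_cancel_left]
      have hcast : (L : ZMod n) = 1 + ((L - 1 - il : ℕ) : ZMod n) + (il : ZMod n) := by
        have h' : 1 + (L - 1 - il) + il = L := by omega
        calc (L : ZMod n) = ((1 + (L - 1 - il) + il : ℕ) : ZMod n) := by rw [h']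
          _ = _ := by push_cast; ring
      have hposn : b - 1 + (L : ZMod n) - ((L - 1 - il : ℕ) : ZMod n) = l := by
        rw [hl, hcast]; ring
      rw [hposn]
    have hlen : wA.length = (ik + 1) + L + (L - 1 - il) := by
      simp [hwA]; omega
    have hmem : ∀ s ∈ wA, s = lampT n ∨ s = lampTA n ∨ s = lampInv (lampT n)
        ∨ s = lampInv (lampTA n) := by
      intro s hs
      rw [hwA] at hs
      simp only [List.mem_append, List.mem_replicate, List.mem_map, List.mem_range] at hs
      rcases hs with (⟨-, rfl⟩ | ⟨i, -, rfl⟩) | ⟨-, rfl⟩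
      · exact Or.inr (Or.inr (Or.inl rfl))
      · by_cases hc : f i
        · rw [if_pos hc]; exact Or.inr (Or.inl rfl)
        · rw [if_neg hc]; exact Or.inl rfl
      · exact Or.inr (Or.inr (Or.inl rfl))
    calc lampDist n (x, k) (y, l) ≤ wA.length := LL.lampDist_le wA hmem hfold
      _ ≤ 2 * L := by rw [hlen]; omega
  · -- route B
    set f : ℕ → Bool := fun i => decide (b + ((L - 1 : ℕ) : ZMod n) - (i : ZMod n) ∈ x ∆ y)
      with hf
    set wB : List (Lamp n) :=
      List.replicate (L - 1 - ik) (lampT n) ++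
      ((List.range L).map (fun i : ℕ => if f i then lampInv (lampTA n) else lampInv (lampT n))) ++
      List.replicate (il + 1) (lampT n) with hwB
    have hfold : (y, l) = wB.foldl lampMul (x, k) := by
      rw [hwB, List.foldl_append, List.foldl_append]
      have hcast1 : ((L - 1 : ℕ) : ZMod n) = (ik : ZMod n) + ((L - 1 - ik : ℕ) : ZMod n) := by
        have h' : ik + (L - 1 - ik) = L - 1 := by omega
        calc ((L - 1 : ℕ) : ZMod n) = ((ik + (L - 1 - ik) : ℕ) : ZMod n) := by rw [h']
          _ = _ := by push_cast; ring
      rw [show (List.replicate (L-1-ik) (lampT n)).foldl lampMul (x, k)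
          = (x, b + ((L - 1 : ℕ) : ZMod n)) by
        rw [LL.foldl_repT, hk, hcast1]; ring_nf]
      rw [LL.foldl_descend f x _ L hLn, LL.foldl_repT]
      have hS : {w | ∃ i < L, f i = true ∧ w = b + ((L - 1 : ℕ) : ZMod n) - (i : ZMod n)}
          = x ∆ y := by
        ext w
        simp only [Set.mem_setOf_eq, hf, decide_eq_true_eq]
        constructor
        · rintro ⟨i, hi, hmem, rfl⟩; exact hmem
        · intro hw
          obtain ⟨j, hj, rfl⟩ := hsub hw
          have hcast2 : ((L - 1 : ℕ) : ZMod n) = ((L - 1 - j : ℕ) : ZMod n) + (j : ZMod n) := by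
            have h' : (L - 1 - j) + j = L - 1 := by omega
            calc ((L - 1 : ℕ) : ZMod n) = (((L - 1 - j) + j : ℕ) : ZMod n) := by rw [h']
              _ = _ := by push_cast; ring
          have harith : b + ((L - 1 : ℕ) : ZMod n) - ((L - 1 - j : ℕ) : ZMod n)
              = b + (j : ZMod n) := by rw [hcast2]; ring
          refine ⟨L - 1 - j, by omega, ?_, harith.symm⟩
          rw [harith]; exact hw
      rw [hS, symmDiff_symmDiff_cancel_left]
      have hcast3 : (L : ZMod n) = ((L - 1 : ℕ) : ZMod n) + 1 := by
        have h' : (L - 1) + 1 = L := by omega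
        calc (L : ZMod n) = (((L - 1) + 1 : ℕ) : ZMod n) := by rw [h']
          _ = _ := by push_cast; ring
      have hposn : b + ((L - 1 : ℕ) : ZMod n) - (L : ZMod n) + ((il + 1 : ℕ) : ZMod n) = l := by
        rw [hl, hcast3]; push_cast; ring
      rw [hposn]
    have hlen : wB.length = (L - 1 - ik) + L + (il + 1) := by
      simp [hwB]; omega
    have hmem : ∀ s ∈ wB, s = lampT n ∨ s = lampTA n ∨ s = lampInv (lampT n)
        ∨ s = lampInv (lampTA n) := by
      intro s hs
      rw [hwB] at hs
      simp only [List.mem_append, List.mem_replicate, List.mem_map, List.mem_range] at hs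
      rcases hs with (⟨-, rfl⟩ | ⟨i, -, rfl⟩) | ⟨-, rfl⟩
      · exact Or.inl rfl
      · by_cases hc : f i
        · rw [if_pos hc]; exact Or.inr (Or.inr (Or.inr rfl))
        · rw [if_neg hc]; exact Or.inr (Or.inr (Or.inl rfl))
      · exact Or.inl rfl
    calc lampDist n (x, k) (y, l) ≤ wB.length := LL.lampDist_le wB hmem hfold
      _ ≤ 2 * L := by rw [hlen]; omega

lemma LL.val_natCast_self [NeZero n] (a : ZMod n) : ((a.val : ℕ) : ZMod n) = a := by
  rw [ZMod.natCast_val]; simp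

end LampAux

/-- `ρ((x,k),(y,l)) ≤ 2(n - g) + 2`, where `g` is the maximal number of vertices of an
arc of `Z_n` disjoint from `{k, l} ∪ (x △ y)` (and `g = 0` if there is no such arc). -/
theorem lampDist_le_two_n_sub_gap
    (n : ℕ) (hn : 2 ≤ n) (x y : Set (ZMod n)) (k l : ZMod n) (g : ℕ)
    (hg : g = sSup {c | ∃ (a : ZMod n) (m : ℕ), m ≤ n - 1 ∧ c = m + 1 ∧
      Disjoint (arcSet n a m) ({k, l} ∪ (x ∆ y))}) :
    lampDist n (x, k) (y, l) ≤ 2 * (n - g) + 2 := by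
  have hn0 : 0 < n := by omega
  haveI : NeZero n := ⟨by omega⟩
  set Sc : Set ℕ := {c | ∃ (a : ZMod n) (m : ℕ), m ≤ n - 1 ∧ c = m + 1 ∧
      Disjoint (arcSet n a m) ({k, l} ∪ (x ∆ y))} with hSc
  by_cases hne : Sc.Nonempty
  · have hbdd : BddAbove Sc := by
      refine ⟨n, fun c hc => ?_⟩
      obtain ⟨a, m, hm, rfl, -⟩ := hc
      omega
    have hmem : g ∈ Sc := by rw [hg]; exact Nat.sSup_mem hne hbdd
    obtain ⟨a, m, hm, hgm, hdisj⟩ := hmem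
    have hknotin : k ∉ arcSet n a m := fun h =>
      Set.disjoint_left.mp hdisj h (Or.inl (Set.mem_insert _ _))
    have hlnotin : l ∉ arcSet n a m := fun h =>
      Set.disjoint_left.mp hdisj h (Or.inl (Set.mem_insert_of_mem _ rfl))
    have hm2 : m + 1 < n := by
      by_contra hcon
      apply hknotin
      refine ⟨(k - a).val, by have := ZMod.val_lt (k - a); omega, ?_⟩
      rw [LL.val_natCast_self]; ring
    set L : ℕ := n - m - 1 with hL
    set b : ZMod n := a + ((m + 1 : ℕ) : ZMod n) with hb
    have hcomp : ∀ z : ZMod n, z ∉ arcSet n a m → ∃ j < L, z = b + (j : ZMod n) := by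
      intro z hz
      set v : ℕ := (z - a).val with hv
      have hvlt : v < n := ZMod.val_lt _
      have hzeq : z = a + (v : ZMod n) := by rw [hv, LL.val_natCast_self]; ring
      have hvm : ¬ v ≤ m := fun hle => hz ⟨v, hle, hzeq⟩
      refine ⟨v - m - 1, by omega, ?_⟩
      rw [hzeq, hb]
      have h' : (m + 1) + (v - m - 1) = v := by omega
      calc a + (v : ZMod n) = a + (((m + 1) + (v - m - 1) : ℕ) : ZMod n) := by rw [h']
        _ = a + ((m + 1 : ℕ) : ZMod n) + ((v - m - 1 : ℕ) : ZMod n) := by push_cast; ring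
    obtain ⟨ik, hik, hkeq⟩ := hcomp k hknotin
    obtain ⟨il, hil, hleq⟩ := hcomp l hlnotin
    have hsub : x ∆ y ⊆ {z | ∃ j < L, z = b + (j : ZMod n)} := by
      intro z hz
      exact hcomp z (fun h => Set.disjoint_left.mp hdisj h (Or.inr hz))
    have hmain := LL.master x y b k l L ik il (by omega) (by omega) hik hil hkeq hleq hsub
    calc lampDist n (x, k) (y, l) ≤ 2 * L := hmain
      _ ≤ 2 * (n - g) + 2 := by omega
  · have hg0 : g = 0 := by
      rw [hg, Set.not_nonempty_iff_eq_empty.mp hne]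
      exact csSup_empty
    have hkeq : k = k + ((0 : ℕ) : ZMod n) := by simp
    have hleq : l = k + (((l - k).val : ℕ) : ZMod n) := by
      rw [LL.val_natCast_self]; ring
    have hsub : x ∆ y ⊆ {z | ∃ j < n, z = k + (j : ZMod n)} := by
      intro z _
      exact ⟨(z - k).val, ZMod.val_lt _, by rw [LL.val_natCast_self]; ring⟩
    have hmain := LL.master x y k k l n 0 ((l - k).val) (by omega) le_rfl (by omega)
      (ZMod.val_lt _) hkeq hleq hsub
    calc lampDist n (x, k) (y, l) ≤ 2 * n := hmain
      _ ≤ 2 * (n - g) + 2 := by omega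
end

section
/- Let n be a positive integer divisible by 6. Then the map φ_{1,n} : P_{1,n} → W_n is a bijection of P_{1,n} onto W_n. -/
open scoped symmDiff

theorem list_map_range_eq {k : ℕ} {f g : ℕ → Bool}
    (h : (List.range k).map f = (List.range k).map g) :
    ∀ j < k, f j = g j := by
  intro j hj
  have h1 : ((List.range k).map f)[j]'(by simpa using hj) =
      ((List.range k).map g)[j]'(by simpa using hj) := List.getElem_of_eq h _
  simpa using h1

/-- For `n` divisible by 6, the map `φ_{1,n}` is a bijection of `P_{1,n}` onto `W_n`. -/
theorem phi1_bijOn (n : ℕ) (hn : 0 < n) (h6 : 6 ∣ n) :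
    Set.BijOn (phi1 n) (lampP1 n) (Wset n) := by
  haveI : NeZero n := ⟨hn.ne'⟩
  obtain ⟨m, hm⟩ := h6
  refine ⟨?_, ?_, ?_⟩
  · intro u hu
    obtain ⟨h1, h2⟩ := hu
    have hv : u.2.val < n := ZMod.val_lt u.2
    refine ⟨?_, ?_, ?_⟩ <;> simp only [phi1, Wset, List.length_map, List.length_range]
    · omega
    · exact h1
    · exact h2
  · intro u hu v hv h
    have hlen : u.2.val = v.2.val := by
      have := congrArg (fun p => p.1.length) h
      simpa [phi1] using this
    have h2 : u.2 = v.2 := ZMod.val_injective n hlen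
    have hA := congrArg Prod.fst h
    have hB := congrArg Prod.snd h
    simp only [phi1] at hA hB
    rw [hlen] at hA hB
    have keyA := list_map_range_eq hA
    have keyB := list_map_range_eq hB
    have h1 : u.1 = v.1 := by
      ext z
      have hz : z.val < n := ZMod.val_lt z
      have hzc : ((z.val : ℕ) : ZMod n) = z := ZMod.natCast_zmod_val z
      by_cases hc : z.val < v.2.val
      · have := keyA z.val hc
        rw [hzc] at this
        constructor <;> intro hh <;> by_contra hcon <;> simp [hh, hcon] at this
      · have hi : n - 1 - z.val < n - v.2.val := by
          have := ZMod.val_lt v.2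
          omega
        have := keyB (n - 1 - z.val) hi
        have harith : n - 1 - (n - 1 - z.val) = z.val := by omega
        rw [harith, hzc] at this
        constructor <;> intro hh <;> by_contra hcon <;> simp [hh, hcon] at this
    exact Prod.ext h1 h2
  · intro p hp
    obtain ⟨hsum, hlo, hhi⟩ := hp
    set k := p.1.length with hk
    have hkn : k < n := by omega
    set x : Set (ZMod n) := {z : ZMod n | if z.val < k then p.1.getD z.val false = true
      else p.2.getD (n - 1 - z.val) false = true} with hx
    refine ⟨(x, (k : ZMod n)), ?_, ?_⟩
    · have : ((k : ℕ) : ZMod n).val = k := ZMod.val_cast_of_lt hkn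
      exact ⟨by rw [this]; exact hlo, by rw [this]; exact hhi⟩
    · have hvk : ((k : ℕ) : ZMod n).val = k := ZMod.val_cast_of_lt hkn
      simp only [phi1, hvk]
      refine Prod.ext ?_ ?_
      · apply List.ext_getElem
        · simp [hk]
        · intro j hj hj'
          simp only [List.getElem_map, List.getElem_range]
          have hjk : j < k := by simpa using hj
          have hjn : ((j : ℕ) : ZMod n).val = j := ZMod.val_cast_of_lt (by omega)
          have hmem : (((j : ℕ) : ZMod n) ∈ x) ↔ p.1[j] = true := by
            rw [hx]
            simp only [Set.mem_setOf_eq, hjn, if_pos hjk, List.getD_eq_getElem _ _ hjk]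
          by_cases hb : p.1[j] = true
          · simp [hmem, hb]
          · simp only [Bool.not_eq_true] at hb
            simp [hmem, hb]
      · apply List.ext_getElem
        · simp; omega
        · intro i hi hi'
          simp only [List.getElem_map, List.getElem_range]
          have hink : i < n - k := by simpa using hi
          have hval : ((n - 1 - i : ℕ) : ZMod n).val = n - 1 - i :=
            ZMod.val_cast_of_lt (by omega)
          have hge : ¬ (n - 1 - i < k) := by omega
          have harith : n - 1 - (n - 1 - i) = i := by omega
          have hip : i < p.2.length := by omega
          have hmem : (((n - 1 - i : ℕ) : ZMod n) ∈ x) ↔ p.2[i] = true := by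
            rw [hx]
            simp only [Set.mem_setOf_eq, hval, if_neg hge, harith,
              List.getD_eq_getElem _ _ hip]
          by_cases hb : p.2[i] = true
          · simp [hmem, hb]
          · simp only [Bool.not_eq_true] at hb
            simp [hmem, hb]
end

section
/- Let n be a positive integer divisible by 6, let (x,k), (y,l) ∈ P_{1,n}, and set (A₁,A₂) = φ_{1,n}(x,k), (B₁,B₂) = φ_{1,n}(y,l). Let D = (x △ y) ∪ {k, l}, regarded as a nonempty subset of {0, 1, ..., n−1}. Then lgc(A₁,B₁) = min D, and lgc(A₂,B₂) = n − 1 − max D if max D ∈ x △ y, while lgc(A₂,B₂) = n − max D if max D ∉ x △ y. -/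
open scoped symmDiff

section LgcAux

lemma lgc_spec (A B : List Bool) : ∀ i, i < lgc A B → A[i]? = B[i]? ∧ (A[i]?).isSome := by
  induction A generalizing B with
  | nil => intro i h; simp [lgc] at h
  | cons a as ih =>
    cases B with
    | nil => intro i h; simp [lgc] at h
    | cons b bs =>
      intro i h
      by_cases hab : a = b
      · cases i with
        | zero => simp [hab]
        | succ j =>
          have := ih bs j (by simp [lgc, hab] at h; omega)
          simpa using this
      · simp [lgc, hab] at h

lemma le_lgc (A B : List Bool) (m : ℕ)
    (h : ∀ i < m, A[i]? = B[i]? ∧ (A[i]?).isSome) : m ≤ lgc A B := by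
  induction A generalizing B m with
  | nil =>
    cases m with
    | zero => simp
    | succ j => have := h 0 (by omega); simp at this
  | cons a as ih =>
    cases m with
    | zero => simp
    | succ j =>
      cases B with
      | nil => have := h 0 (by omega); simp at this
      | cons b bs =>
        have h0 := h 0 (by omega)
        simp at h0
        have hj : j ≤ lgc as bs := ih bs j (fun i hi => by simpa using h (i+1) (by omega))
        simp [lgc, h0]
        omega

lemma lgc_le (A B : List Bool) (m : ℕ)
    (h : ¬(A[m]? = B[m]? ∧ (A[m]?).isSome)) : lgc A B ≤ m := by
  by_contra hlt
  exact h (lgc_spec A B m (by omega))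

open Classical in
lemma getElem?_phi1_fst (n : ℕ) (u : Lamp n) (i : ℕ) :
    (phi1 n u).1[i]? = if i < u.2.val then
      some (if ((i : ℕ) : ZMod n) ∈ u.1 then true else false) else none := by
  simp only [phi1, List.getElem?_map]
  split
  · rename_i h
    rw [List.getElem?_range h]
    rfl
  · rename_i h
    rw [List.getElem?_eq_none (by simpa using not_lt.mp h)]
    rfl

open Classical in
lemma getElem?_phi1_snd (n : ℕ) (u : Lamp n) (i : ℕ) :
    (phi1 n u).2[i]? = if i < n - u.2.val then
      some (if ((n - 1 - i : ℕ) : ZMod n) ∈ u.1 then true else false) else none := by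
  simp only [phi1, List.getElem?_map]
  split
  · rename_i h
    rw [List.getElem?_range h]
    rfl
  · rename_i h
    rw [List.getElem?_eq_none (by simpa using not_lt.mp h)]
    rfl

end LgcAux

/-- For `(x,k), (y,l) ∈ P_{1,n}` with images `(A₁,A₂) = φ_{1,n}(x,k)`,
`(B₁,B₂) = φ_{1,n}(y,l)`, and `D = (x △ y) ∪ {k,l}` regarded as a subset of
`{0,...,n-1}`: `lgc(A₁,B₁) = min D`, and `lgc(A₂,B₂) = n - 1 - max D` if
`max D ∈ x △ y`, while `lgc(A₂,B₂) = n - max D` if `max D ∉ x △ y`. -/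
theorem lgc_of_phi1
    (n : ℕ) (hn : 0 < n) (h6 : 6 ∣ n)
    (x y : Set (ZMod n)) (k l : ZMod n)
    (hxk : ((x, k) : Lamp n) ∈ lampP1 n) (hyl : ((y, l) : Lamp n) ∈ lampP1 n)
    (D : Set ℕ)
    (hD : D = {m | m < n ∧ (((m : ℕ) : ZMod n) ∈ x ∆ y ∨ ((m : ℕ) : ZMod n) = k ∨
      ((m : ℕ) : ZMod n) = l)}) :
    lgc (phi1 n (x, k)).1 (phi1 n (y, l)).1 = sInf D ∧
    (((sSup D : ℕ) : ZMod n) ∈ x ∆ y →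
      lgc (phi1 n (x, k)).2 (phi1 n (y, l)).2 = n - 1 - sSup D) ∧
    (((sSup D : ℕ) : ZMod n) ∉ x ∆ y →
      lgc (phi1 n (x, k)).2 (phi1 n (y, l)).2 = n - sSup D) := by
  haveI : NeZero n := ⟨hn.ne'⟩
  have hKn : k.val < n := ZMod.val_lt k
  have hLn : l.val < n := ZMod.val_lt l
  have hkK : ((k.val : ℕ) : ZMod n) = k := by simp [ZMod.natCast_val, ZMod.cast_id]
  have hlL : ((l.val : ℕ) : ZMod n) = l := by simp [ZMod.natCast_val, ZMod.cast_id]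
  have hKD : k.val ∈ D := by rw [hD]; exact ⟨hKn, Or.inr (Or.inl hkK)⟩
  have hLD : l.val ∈ D := by rw [hD]; exact ⟨hLn, Or.inr (Or.inr hlL)⟩
  have hDne : D.Nonempty := ⟨k.val, hKD⟩
  have hbdd : BddAbove D := ⟨n, fun m hm => by rw [hD] at hm; exact hm.1.le⟩
  have hcastK : ∀ m, m < n → ((m : ℕ) : ZMod n) = k → m = k.val := by
    intro m hm h
    have := congrArg ZMod.val h
    rwa [ZMod.val_cast_of_lt hm] at this
  have hcastL : ∀ m, m < n → ((m : ℕ) : ZMod n) = l → m = l.val := by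
    intro m hm h
    have := congrArg ZMod.val h
    rwa [ZMod.val_cast_of_lt hm] at this
  have hnotD : ∀ i, i < n → i ∉ D →
      ((i : ZMod n) ∉ x ∆ y ∧ ((i : ℕ) : ZMod n) ≠ k ∧ ((i : ℕ) : ZMod n) ≠ l) := by
    intro i h1 h2
    rw [hD] at h2
    simp only [Set.mem_setOf_eq, h1, true_and] at h2
    tauto
  have hfst : ((x, k) : Lamp n).1 = x := rfl
  have hsnd : ((x, k) : Lamp n).2 = k := rfl
  have hfst' : ((y, l) : Lamp n).1 = y := rfl
  have hsnd' : ((y, l) : Lamp n).2 = l := rfl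
  -- facts about sInf
  have hMD : sInf D ∈ D := Nat.sInf_mem hDne
  have hMK : sInf D ≤ k.val := Nat.sInf_le hKD
  have hML : sInf D ≤ l.val := Nat.sInf_le hLD
  have hmemD : ∀ m, m ∈ D ↔ (m < n ∧ (((m : ℕ) : ZMod n) ∈ x ∆ y ∨ ((m : ℕ) : ZMod n) = k ∨
      ((m : ℕ) : ZMod n) = l)) := fun m => by rw [hD]; rfl
  obtain ⟨hMn, hMc⟩ := (hmemD _).mp hMD
  -- facts about sSup
  have hSD : sSup D ∈ D := Nat.sSup_mem hDne hbdd
  have hSK : k.val ≤ sSup D := le_csSup hbdd hKD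
  have hSL : l.val ≤ sSup D := le_csSup hbdd hLD
  obtain ⟨hSn, hSc⟩ := (hmemD _).mp hSD
  refine ⟨?_, ?_, ?_⟩
  · -- lgc A₁ B₁ = sInf D
    apply le_antisymm
    · apply lgc_le
      rw [getElem?_phi1_fst, getElem?_phi1_fst, hfst, hsnd, hfst', hsnd']
      rcases hMc with hxy | hk | hl
      · by_cases h1 : sInf D < k.val
        · by_cases h2 : sInf D < l.val
          · rw [if_pos h1, if_pos h2]
            rintro ⟨heq, -⟩
            rw [Set.mem_symmDiff] at hxy
            rcases hxy with ⟨hx, hy⟩ | ⟨hy, hx⟩ <;> simp [hx, hy] at heq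
          · rw [if_neg h2]
            split <;> simp
        · rw [if_neg h1]; simp
      · have : sInf D = k.val := hcastK _ hMn hk
        rw [if_neg (by omega)]; simp
      · have : sInf D = l.val := hcastL _ hMn hl
        rw [if_neg (show ¬ sInf D < l.val by omega)]
        split <;> simp
    · apply le_lgc
      intro i hi
      rw [getElem?_phi1_fst, getElem?_phi1_fst, hfst, hsnd, hfst', hsnd']
      have hiD : i ∉ D := fun hmem => absurd (Nat.sInf_le hmem) (by omega)
      obtain ⟨hxy, -, -⟩ := hnotD i (by omega) hiD
      rw [Set.mem_symmDiff] at hxy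
      push_neg at hxy
      rw [if_pos (show i < k.val by omega), if_pos (show i < l.val by omega)]
      refine ⟨?_, rfl⟩
      congr 1
      by_cases hmem : ((i : ℕ) : ZMod n) ∈ x
      · rw [if_pos hmem, if_pos (hxy.1 hmem)]
      · rw [if_neg hmem, if_neg (fun h => hmem (hxy.2 h))]
  · -- sSup D ∈ x ∆ y
    intro hMxy
    apply le_antisymm
    · apply lgc_le
      rw [getElem?_phi1_snd, getElem?_phi1_snd, hfst, hsnd, hfst', hsnd']
      rw [if_pos (show n - 1 - sSup D < n - k.val by omega), if_pos (show n - 1 - sSup D < n - l.val by omega)]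
      have h1 : n - 1 - (n - 1 - sSup D) = sSup D := by omega
      rw [h1]
      rintro ⟨heq, -⟩
      rw [Set.mem_symmDiff] at hMxy
      rcases hMxy with ⟨hx, hy⟩ | ⟨hy, hx⟩ <;> simp [hx, hy] at heq
    · apply le_lgc
      intro i hi
      rw [getElem?_phi1_snd, getElem?_phi1_snd, hfst, hsnd, hfst', hsnd']
      rw [if_pos (show i < n - k.val by omega), if_pos (show i < n - l.val by omega)]
      have hne : n - 1 - i ∉ D := fun hmem => absurd (le_csSup hbdd hmem) (by omega)
      obtain ⟨hxy, -, -⟩ := hnotD _ (by omega) hne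
      rw [Set.mem_symmDiff] at hxy
      push_neg at hxy
      refine ⟨?_, rfl⟩
      congr 1
      by_cases hmem : ((n - 1 - i : ℕ) : ZMod n) ∈ x
      · rw [if_pos hmem, if_pos (hxy.1 hmem)]
      · rw [if_neg hmem, if_neg (fun h => hmem (hxy.2 h))]
  · -- sSup D ∉ x ∆ y
    intro hMxy
    have hKL : sSup D = k.val ∨ sSup D = l.val := by
      rcases hSc with h | h | h
      · exact absurd h hMxy
      · exact Or.inl (hcastK _ hSn h)
      · exact Or.inr (hcastL _ hSn h)
    apply le_antisymm
    · apply lgc_le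
      rw [getElem?_phi1_snd, getElem?_phi1_snd, hfst, hsnd, hfst', hsnd']
      rcases hKL with h | h
      · rw [if_neg (show ¬ n - sSup D < n - k.val by omega)]; simp
      · rw [if_neg (show ¬ n - sSup D < n - l.val by omega)]
        split <;> simp
    · apply le_lgc
      intro i hi
      rw [getElem?_phi1_snd, getElem?_phi1_snd, hfst, hsnd, hfst', hsnd']
      rw [if_pos (show i < n - k.val by omega), if_pos (show i < n - l.val by omega)]
      by_cases hcase : n - 1 - i = sSup D
      · rw [hcase]
        rw [Set.mem_symmDiff] at hMxy
        push_neg at hMxy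
        refine ⟨?_, rfl⟩
        congr 1
        by_cases hmem : ((sSup D : ℕ) : ZMod n) ∈ x
        · rw [if_pos hmem, if_pos (hMxy.1 hmem)]
        · rw [if_neg hmem, if_neg (fun h => hmem (hMxy.2 h))]
      · have hne : n - 1 - i ∉ D := fun hmem => absurd (le_csSup hbdd hmem) (by omega)
        obtain ⟨hxy, -, -⟩ := hnotD _ (by omega) hne
        rw [Set.mem_symmDiff] at hxy
        push_neg at hxy
        refine ⟨?_, rfl⟩
        congr 1
        by_cases hmem : ((n - 1 - i : ℕ) : ZMod n) ∈ x
        · rw [if_pos hmem, if_pos (hxy.1 hmem)]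
        · rw [if_neg hmem, if_neg (fun h => hmem (hxy.2 h))]
end
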